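/- arXiv:1401.7895 — 4 statements merged into one kernel-verified Lean document; each statement's English description precedes it below -/
import Mathlib

section
/- Let A be an algebra of subsets of a nonempty set Ω, and let M be a set of bounded finitely additive set functions on A. Define A(M) as the set of all countable convex combinations ∑ₙ αₙ |μₙ|/(1 ∨ ‖μₙ‖) with μₙ ∈ M, αₙ ≥ 0, ∑ₙ αₙ = 1, and L(M) as the set of ν ∈ ba(A) absolutely continuous with respect to some m ∈ A(M). Then L(M) is a band (normal sublattice) of ba(A): it is solid (|ν₁| ≤ |ν| and ν ∈ L(M) imply ν₁ ∈ L(M)) and closed under existing suprema of arbitrary nonempty families. -/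
open Set Filter Topology

variable {Ω : Type*}

/-- `𝒜` is an algebra of subsets of `Ω`. -/
def IsAlg (𝒜 : Set (Set Ω)) : Prop :=
  ∅ ∈ 𝒜 ∧ Set.univ ∈ 𝒜 ∧ (∀ A ∈ 𝒜, Aᶜ ∈ 𝒜) ∧ ∀ A ∈ 𝒜, ∀ B ∈ 𝒜, A ∪ B ∈ 𝒜

/-- bounded finitely additive set function (element of ba(𝒜)). -/
def IsFinAdd (𝒜 : Set (Set Ω)) (μ : Set Ω → ℝ) : Prop :=
  μ ∅ = 0 ∧
  (∀ A ∈ 𝒜, ∀ B ∈ 𝒜, Disjoint A B → μ (A ∪ B) = μ A + μ B) ∧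
  ∃ C : ℝ, ∀ A ∈ 𝒜, |μ A| ≤ C

def IsPos (𝒜 : Set (Set Ω)) (μ : Set Ω → ℝ) : Prop := ∀ A ∈ 𝒜, 0 ≤ μ A

def IsCtblAdd (𝒜 : Set (Set Ω)) (μ : Set Ω → ℝ) : Prop :=
  ∀ A : ℕ → Set Ω, (∀ n, A n ∈ 𝒜) → Pairwise (Function.onFun Disjoint A) →
    (⋃ n, A n) ∈ 𝒜 → HasSum (fun n => μ (A n)) (μ (⋃ n, A n))

/-- total variation of `μ` on `A`. -/
noncomputable def tv (𝒜 : Set (Set Ω)) (μ : Set Ω → ℝ) (A : Set Ω) : ℝ :=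
  sSup {x | ∃ B ∈ 𝒜, B ⊆ A ∧ x = μ B - μ (A \ B)}

noncomputable def tvNorm (𝒜 : Set (Set Ω)) (μ : Set Ω → ℝ) : ℝ := tv 𝒜 μ Set.univ

/-- `ν ≪ μ`, absolute continuity in the ε-δ sense. -/
def AC (𝒜 : Set (Set Ω)) (ν μ : Set Ω → ℝ) : Prop :=
  ∀ ε > (0:ℝ), ∃ δ > (0:ℝ), ∀ E ∈ 𝒜, tv 𝒜 μ E < δ → tv 𝒜 ν E < ε

/-- `μ ⊥ ν`, singularity in the ε sense. -/
def Sing (𝒜 : Set (Set Ω)) (μ ν : Set Ω → ℝ) : Prop :=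
  ∀ ε > (0:ℝ), ∃ B ∈ 𝒜, tv 𝒜 μ Bᶜ + tv 𝒜 ν B < ε

/-- normalized total variation `|μ|/(1 ∨ ‖μ‖)`. -/
noncomputable def nvar (𝒜 : Set (Set Ω)) (μ : Set Ω → ℝ) (A : Set Ω) : ℝ :=
  tv 𝒜 μ A / (1 ⊔ tvNorm 𝒜 μ)

/-- membership in `𝐀(M)`: countable convex combinations of normalized variations. -/
def MemAM (𝒜 : Set (Set Ω)) (M : Set (Set Ω → ℝ)) (m : Set Ω → ℝ) : Prop :=
  ∃ (μ : ℕ → Set Ω → ℝ) (α : ℕ → ℝ),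
    (∀ n, μ n ∈ M) ∧ (∀ n, 0 ≤ α n) ∧ HasSum α 1 ∧
    ∀ A : Set Ω, m A = ∑' n, α n * nvar 𝒜 (μ n) A

/-- membership in `𝐋(M)`. -/
def MemLM (𝒜 : Set (Set Ω)) (M : Set (Set Ω → ℝ)) (ν : Set Ω → ℝ) : Prop :=
  ∃ m, MemAM 𝒜 M m ∧ AC 𝒜 ν m

/-- order on ba(𝒜). -/
def baLE (𝒜 : Set (Set Ω)) (μ ν : Set Ω → ℝ) : Prop := ∀ A ∈ 𝒜, μ A ≤ ν A

/-- λ-completion of 𝒜. -/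
def Completion (𝒜 : Set (Set Ω)) (l : Set Ω → ℝ) : Set (Set Ω) :=
  {B | ∀ ε > (0:ℝ), ∃ A ∈ 𝒜, ∃ A' ∈ 𝒜, A ⊆ B ∧ B ⊆ A' ∧ l (A' \ A) < ε}

/-- the extension `λ̄` to the completion. -/
noncomputable def extOf (𝒜 : Set (Set Ω)) (l : Set Ω → ℝ) (B : Set Ω) : ℝ :=
  sSup {x | ∃ A ∈ 𝒜, A ⊆ B ∧ x = l A}

/-- λ-atom. -/
def IsLAtom (𝒜 : Set (Set Ω)) (l : Set Ω → ℝ) (B : Set Ω) : Prop :=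
  B ∈ 𝒜 ∧ 0 < l B ∧ ∀ A ∈ 𝒜, A ⊆ B → l A = 0 ∨ l (B \ A) = 0

/-- simple 𝒜-measurable function. -/
def IsSimple (𝒜 : Set (Set Ω)) (f : Ω → ℝ) : Prop :=
  (Set.range f).Finite ∧ ∀ c : ℝ, f ⁻¹' {c} ∈ 𝒜

/-- integral of a simple function. -/
noncomputable def simpleInt (μ : Set Ω → ℝ) (f : Ω → ℝ) : ℝ :=
  ∑ᶠ c : ℝ, c * μ (f ⁻¹' {c})

/-- outer measure associated with l on 𝒜. -/
noncomputable def outerOf (𝒜 : Set (Set Ω)) (l : Set Ω → ℝ) (S : Set Ω) : ℝ :=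
  sInf {x | ∃ A ∈ 𝒜, S ⊆ A ∧ x = l A}

/-- Dunford–Schwartz approximating sequence for `f`. -/
def ApproxSeq (𝒜 : Set (Set Ω)) (l : Set Ω → ℝ) (f : Ω → ℝ) (g : ℕ → Ω → ℝ) : Prop :=
  (∀ n, IsSimple 𝒜 (g n)) ∧
  (∀ ε > (0:ℝ), ∃ N, ∀ p ≥ N, ∀ q ≥ N, simpleInt l (fun x => |g p x - g q x|) < ε) ∧
  (∀ ε > (0:ℝ), Tendsto (fun n => outerOf 𝒜 l {x | ε ≤ |g n x - f x|}) atTop (nhds 0))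

/-- membership in L¹(l). -/
def MemL1 (𝒜 : Set (Set Ω)) (l : Set Ω → ℝ) (f : Ω → ℝ) : Prop :=
  ∃ g, ApproxSeq 𝒜 l f g

/-- the Dunford–Schwartz integral. -/
noncomputable def dsInt (𝒜 : Set (Set Ω)) (l : Set Ω → ℝ) (f : Ω → ℝ) : ℝ :=
  sInf {I | ∃ g, ApproxSeq 𝒜 l f g ∧ Tendsto (fun n => simpleInt l (g n)) atTop (nhds I)}

/-- L¹ seminorm distance. -/
noncomputable def l1dist (𝒜 : Set (Set Ω)) (l : Set Ω → ℝ) (f h : Ω → ℝ) : ℝ :=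
  dsInt 𝒜 l (fun x => |f x - h x|)

/-- membership in the L¹(l)-closure of a set C of functions. -/
def InL1Closure (𝒜 : Set (Set Ω)) (l : Set Ω → ℝ) (C : Set (Ω → ℝ)) (f : Ω → ℝ) : Prop :=
  ∀ ε > (0:ℝ), ∃ h ∈ C, l1dist 𝒜 l f h < ε

/-- the set C = K − Sim(𝒜)₊. -/
def ConeDiff (𝒜 : Set (Set Ω)) (K : Set (Ω → ℝ)) : Set (Ω → ℝ) :=
  {f | ∃ k ∈ K, ∃ s : Ω → ℝ, IsSimple 𝒜 s ∧ (∀ x, 0 ≤ s x) ∧ f = k - s}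
section Helpers

variable {Ω : Type*} {𝒜 : Set (Set Ω)} {μ g h : Set Ω → ℝ} {A B : Set Ω}

lemma alg_inter (hA : IsAlg 𝒜) (h1 : A ∈ 𝒜) (h2 : B ∈ 𝒜) : A ∩ B ∈ 𝒜 := by
  have e : A ∩ B = (Aᶜ ∪ Bᶜ)ᶜ := by simp [Set.compl_union]
  rw [e]
  exact hA.2.2.1 _ (hA.2.2.2 _ (hA.2.2.1 _ h1) _ (hA.2.2.1 _ h2))

lemma alg_diff (hA : IsAlg 𝒜) (h1 : A ∈ 𝒜) (h2 : B ∈ 𝒜) : A \ B ∈ 𝒜 := by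
  rw [Set.diff_eq]; exact alg_inter hA h1 (hA.2.2.1 _ h2)

lemma fa_diff (hA : IsAlg 𝒜) (hμ : IsFinAdd 𝒜 μ) (hAm : A ∈ 𝒜) (hBm : B ∈ 𝒜)
    (hsub : B ⊆ A) : μ A = μ B + μ (A \ B) := by
  have e : B ∪ (A \ B) = A := Set.union_diff_cancel hsub
  have := hμ.2.1 B hBm (A \ B) (alg_diff hA hAm hBm) Set.disjoint_sdiff_right
  rw [e] at this; exact this

lemma fa_neg (hμ : IsFinAdd 𝒜 μ) : IsFinAdd 𝒜 (fun S => -μ S) := by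
  obtain ⟨C, hC⟩ := hμ.2.2
  exact ⟨by simp [hμ.1], fun A hA B hB hd => by simp [hμ.2.1 A hA B hB hd]; ring,
    ⟨C, fun A hAm => by simpa using hC A hAm⟩⟩

lemma fa_sub (hμ : IsFinAdd 𝒜 μ) (hg : IsFinAdd 𝒜 g) :
    IsFinAdd 𝒜 (fun S => μ S - g S) := by
  obtain ⟨C, hC⟩ := hμ.2.2
  obtain ⟨D, hD⟩ := hg.2.2
  refine ⟨by simp [hμ.1, hg.1], fun A hA B hB hd => by
    simp only []; rw [hμ.2.1 A hA B hB hd, hg.2.1 A hA B hB hd]; ring,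
    ⟨C + D, fun A hAm => ?_⟩⟩
  calc |μ A - g A| ≤ |μ A| + |g A| := abs_sub _ _
    _ ≤ C + D := add_le_add (hC A hAm) (hD A hAm)

end Helpers
section DSup

variable {Ω : Type*} {𝒜 : Set (Set Ω)} {μ g h : Set Ω → ℝ} {A B : Set Ω}

/-- lattice-sup candidate of two additive set functions. -/
noncomputable def dSup (𝒜 : Set (Set Ω)) (g h : Set Ω → ℝ) (A : Set Ω) : ℝ :=
  sSup {x | ∃ B ∈ 𝒜, B ⊆ A ∧ x = g B + h (A \ B)}

lemma tv_eq_dSup (𝒜 : Set (Set Ω)) (μ : Set Ω → ℝ) (A : Set Ω) :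
    tv 𝒜 μ A = dSup 𝒜 μ (fun S => -μ S) A := by
  unfold tv dSup
  congr 1

lemma dSet_nonempty (hA : IsAlg 𝒜) (g h : Set Ω → ℝ) (A : Set Ω) :
    {x | ∃ B ∈ 𝒜, B ⊆ A ∧ x = g B + h (A \ B)}.Nonempty :=
  ⟨g ∅ + h (A \ ∅), ∅, hA.1, Set.empty_subset A, rfl⟩

lemma dSet_bdd (hA : IsAlg 𝒜) (hg : IsFinAdd 𝒜 g) (hh : IsFinAdd 𝒜 h) (hAm : A ∈ 𝒜) :
    BddAbove {x | ∃ B ∈ 𝒜, B ⊆ A ∧ x = g B + h (A \ B)} := by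
  obtain ⟨C, hC⟩ := hg.2.2
  obtain ⟨D, hD⟩ := hh.2.2
  refine ⟨C + D, ?_⟩
  rintro x ⟨B, hB, hBA, rfl⟩
  have h1 := abs_le.1 (hC B hB)
  have h2 := abs_le.1 (hD (A \ B) (alg_diff hA hAm hB))
  linarith [h1.2, h2.2]

lemma le_dSup (hA : IsAlg 𝒜) (hg : IsFinAdd 𝒜 g) (hh : IsFinAdd 𝒜 h) (hAm : A ∈ 𝒜)
    (hBm : B ∈ 𝒜) (hBA : B ⊆ A) : g B + h (A \ B) ≤ dSup 𝒜 g h A :=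
  le_csSup (dSet_bdd hA hg hh hAm) ⟨B, hBm, hBA, rfl⟩

lemma dSup_le (hA : IsAlg 𝒜) {K : ℝ}
    (hK : ∀ B ∈ 𝒜, B ⊆ A → g B + h (A \ B) ≤ K) : dSup 𝒜 g h A ≤ K := by
  refine csSup_le (dSet_nonempty hA g h A) ?_
  rintro x ⟨B, hB, hBA, rfl⟩
  exact hK B hB hBA

lemma dSup_ge_g (hA : IsAlg 𝒜) (hg : IsFinAdd 𝒜 g) (hh : IsFinAdd 𝒜 h) (hAm : A ∈ 𝒜) :
    g A ≤ dSup 𝒜 g h A := by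
  have := le_dSup (B := A) hA hg hh hAm hAm subset_rfl
  simpa [Set.diff_self, hh.1] using this

lemma dSup_ge_h (hA : IsAlg 𝒜) (hg : IsFinAdd 𝒜 g) (hh : IsFinAdd 𝒜 h) (hAm : A ∈ 𝒜) :
    h A ≤ dSup 𝒜 g h A := by
  have := le_dSup (B := ∅) hA hg hh hAm hA.1 (Set.empty_subset A)
  simpa [hg.1] using this

lemma dSup_le_rho (hA : IsAlg 𝒜) {ρ : Set Ω → ℝ} (hρ : IsFinAdd 𝒜 ρ) (hAm : A ∈ 𝒜)
    (hgρ : ∀ B ∈ 𝒜, g B ≤ ρ B) (hhρ : ∀ B ∈ 𝒜, h B ≤ ρ B) : dSup 𝒜 g h A ≤ ρ A := by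
  refine dSup_le hA (fun B hB hBA => ?_)
  have e := fa_diff hA hρ hAm hB hBA
  have := hgρ B hB
  have := hhρ (A \ B) (alg_diff hA hAm hB)
  linarith

lemma dSup_empty (hA : IsAlg 𝒜) (hg0 : g ∅ = 0) (hh0 : h ∅ = 0) : dSup 𝒜 g h ∅ = 0 := by
  have e : {x | ∃ B ∈ 𝒜, B ⊆ (∅ : Set Ω) ∧ x = g B + h (∅ \ B)} = {0} := by
    ext x
    constructor
    · rintro ⟨B, hB, hBA, rfl⟩
      have : B = ∅ := Set.subset_empty_iff.1 hBA
      simp [this, hg0, hh0]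
    · rintro rfl
      exact ⟨∅, hA.1, subset_rfl, by simp [hg0, hh0]⟩
  unfold dSup
  rw [e, csSup_singleton]

lemma dSup_union (hA : IsAlg 𝒜) (hg : IsFinAdd 𝒜 g) (hh : IsFinAdd 𝒜 h)
    (hAm : A ∈ 𝒜) (hBm : B ∈ 𝒜) (hd : Disjoint A B) :
    dSup 𝒜 g h (A ∪ B) = dSup 𝒜 g h A + dSup 𝒜 g h B := by
  have hABm : A ∪ B ∈ 𝒜 := hA.2.2.2 _ hAm _ hBm
  have hd' : ∀ x, x ∈ A → x ∉ B := fun x hx => Set.disjoint_left.1 hd hx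
  apply le_antisymm
  · refine dSup_le hA (fun C hCm hCs => ?_)
    have hC1m : C ∩ A ∈ 𝒜 := alg_inter hA hCm hAm
    have hC2m : C ∩ B ∈ 𝒜 := alg_inter hA hCm hBm
    have hCeq : C = (C ∩ A) ∪ (C ∩ B) := by
      ext x
      have h1 := @hCs x
      simp only [Set.mem_union, Set.mem_inter_iff]
      constructor
      · intro hx
        rcases h1 hx with hx' | hx'
        · exact Or.inl ⟨hx, hx'⟩
        · exact Or.inr ⟨hx, hx'⟩
      · rintro (⟨hx, _⟩ | ⟨hx, _⟩) <;> exact hx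
    have hdisC : Disjoint (C ∩ A) (C ∩ B) := by
      refine Set.disjoint_left.2 ?_
      rintro x ⟨_, hxA⟩ ⟨_, hxB⟩
      exact hd' x hxA hxB
    have hgC : g C = g (C ∩ A) + g (C ∩ B) := by
      have e := hg.2.1 _ hC1m _ hC2m hdisC
      rw [← hCeq] at e
      exact e
    have hset : (A ∪ B) \ C = (A \ (C ∩ A)) ∪ (B \ (C ∩ B)) := by
      ext x
      have h1 := hd' x
      simp only [Set.mem_diff, Set.mem_union, Set.mem_inter_iff]
      tauto
    have hdis2 : Disjoint (A \ (C ∩ A)) (B \ (C ∩ B)) := by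
      refine Set.disjoint_left.2 ?_
      rintro x ⟨hxA, _⟩ ⟨hxB, _⟩
      exact hd' x hxA hxB
    have hhC : h ((A ∪ B) \ C) = h (A \ (C ∩ A)) + h (B \ (C ∩ B)) := by
      rw [hset]
      exact hh.2.1 _ (alg_diff hA hAm hC1m) _ (alg_diff hA hBm hC2m) hdis2
    have e1 : g (C ∩ A) + h (A \ (C ∩ A)) ≤ dSup 𝒜 g h A :=
      le_dSup hA hg hh hAm hC1m Set.inter_subset_right
    have e2 : g (C ∩ B) + h (B \ (C ∩ B)) ≤ dSup 𝒜 g h B :=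
      le_dSup hA hg hh hBm hC2m Set.inter_subset_right
    rw [hgC, hhC]
    linarith
  · have key : ∀ C ∈ 𝒜, C ⊆ A → ∀ D ∈ 𝒜, D ⊆ B →
        (g C + h (A \ C)) + (g D + h (B \ D)) ≤ dSup 𝒜 g h (A ∪ B) := by
      intro C hCm hCs D hDm hDs
      have hCD : C ∪ D ∈ 𝒜 := hA.2.2.2 _ hCm _ hDm
      have hCDs : C ∪ D ⊆ A ∪ B := Set.union_subset_union hCs hDs
      have hdisCD : Disjoint C D :=
        Set.disjoint_left.2 (fun x hxC hxD => hd' x (hCs hxC) (hDs hxD))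
      have hgCD : g (C ∪ D) = g C + g D := hg.2.1 _ hCm _ hDm hdisCD
      have hset : (A ∪ B) \ (C ∪ D) = (A \ C) ∪ (B \ D) := by
        ext x
        have h1 := hd' x
        have h2 := @hCs x
        have h3 := @hDs x
        simp only [Set.mem_diff, Set.mem_union]
        tauto
      have hdis2 : Disjoint (A \ C) (B \ D) :=
        Set.disjoint_left.2 (fun x hx1 hx2 => hd' x hx1.1 hx2.1)
      have hhCD : h ((A ∪ B) \ (C ∪ D)) = h (A \ C) + h (B \ D) := by
        rw [hset]
        exact hh.2.1 _ (alg_diff hA hAm hCm) _ (alg_diff hA hBm hDm) hdis2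
      have := le_dSup hA hg hh hABm hCD hCDs
      rw [hgCD, hhCD] at this
      linarith
    have step : ∀ C ∈ 𝒜, C ⊆ A →
        g C + h (A \ C) + dSup 𝒜 g h B ≤ dSup 𝒜 g h (A ∪ B) := by
      intro C hCm hCs
      have : dSup 𝒜 g h B ≤ dSup 𝒜 g h (A ∪ B) - (g C + h (A \ C)) := by
        refine dSup_le hA (fun D hDm hDs => ?_)
        have := key C hCm hCs D hDm hDs
        linarith
      linarith
    have : dSup 𝒜 g h A ≤ dSup 𝒜 g h (A ∪ B) - dSup 𝒜 g h B := by
      refine dSup_le hA (fun C hCm hCs => ?_)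
      have := step C hCm hCs
      linarith
    linarith

lemma dSup_fa (hA : IsAlg 𝒜) (hg : IsFinAdd 𝒜 g) (hh : IsFinAdd 𝒜 h) :
    IsFinAdd 𝒜 (dSup 𝒜 g h) := by
  obtain ⟨C, hC⟩ := hg.2.2
  obtain ⟨D, hD⟩ := hh.2.2
  have hC0 : 0 ≤ C := le_trans (abs_nonneg _) (hC ∅ hA.1)
  have hD0 : 0 ≤ D := le_trans (abs_nonneg _) (hD ∅ hA.1)
  refine ⟨dSup_empty hA hg.1 hh.1, fun A hAm B hBm hd => dSup_union hA hg hh hAm hBm hd,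
    ⟨C + D, fun A hAm => abs_le.2 ⟨?_, ?_⟩⟩⟩
  · have := dSup_ge_h hA hg hh hAm
    have := (abs_le.1 (hD A hAm)).1
    linarith
  · refine dSup_le hA (fun B hB hBA => ?_)
    have h1 := (abs_le.1 (hC B hB)).2
    have h2 := (abs_le.1 (hD (A \ B) (alg_diff hA hAm hB))).2
    linarith

end DSup
section TV

variable {Ω : Type*} {𝒜 : Set (Set Ω)} {μ a b c r : Set Ω → ℝ} {A B E : Set Ω}

lemma tv_fa (hA : IsAlg 𝒜) (hμ : IsFinAdd 𝒜 μ) : IsFinAdd 𝒜 (tv 𝒜 μ) := by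
  have e : tv 𝒜 μ = dSup 𝒜 μ (fun S => -μ S) := funext (tv_eq_dSup 𝒜 μ)
  rw [e]
  exact dSup_fa hA hμ (fa_neg hμ)

lemma tv_le (hA : IsAlg 𝒜)
    {K : ℝ} (hK : ∀ B ∈ 𝒜, B ⊆ A → μ B - μ (A \ B) ≤ K) : tv 𝒜 μ A ≤ K := by
  rw [tv_eq_dSup]
  exact dSup_le hA (fun B hB hBA => hK B hB hBA)

lemma tv_mem_le (hA : IsAlg 𝒜) (hμ : IsFinAdd 𝒜 μ) (hAm : A ∈ 𝒜)
    (hBm : B ∈ 𝒜) (hBA : B ⊆ A) : μ B - μ (A \ B) ≤ tv 𝒜 μ A := by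
  rw [tv_eq_dSup]
  exact le_dSup hA hμ (fa_neg hμ) hAm hBm hBA

lemma tv_ge_self (hA : IsAlg 𝒜) (hμ : IsFinAdd 𝒜 μ) (hAm : A ∈ 𝒜) :
    μ A ≤ tv 𝒜 μ A := by
  have := tv_mem_le (B := A) hA hμ hAm hAm subset_rfl
  simpa [Set.diff_self, hμ.1] using this

lemma tv_ge_neg_self (hA : IsAlg 𝒜) (hμ : IsFinAdd 𝒜 μ) (hAm : A ∈ 𝒜) :
    -μ A ≤ tv 𝒜 μ A := by
  have := tv_mem_le (B := ∅) hA hμ hAm hA.1 (Set.empty_subset A)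
  simpa [hμ.1] using this

lemma tv_ge_abs (hA : IsAlg 𝒜) (hμ : IsFinAdd 𝒜 μ) (hAm : A ∈ 𝒜) :
    |μ A| ≤ tv 𝒜 μ A :=
  abs_le.2 ⟨by linarith [tv_ge_neg_self hA hμ hAm], tv_ge_self hA hμ hAm⟩

lemma tv_nonneg (hA : IsAlg 𝒜) (hμ : IsFinAdd 𝒜 μ) (hAm : A ∈ 𝒜) :
    0 ≤ tv 𝒜 μ A :=
  le_trans (abs_nonneg _) (tv_ge_abs hA hμ hAm)

lemma tv_mono (hA : IsAlg 𝒜) (hμ : IsFinAdd 𝒜 μ) (hBm : B ∈ 𝒜) (hAm : A ∈ 𝒜)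
    (hBA : B ⊆ A) : tv 𝒜 μ B ≤ tv 𝒜 μ A := by
  have e := fa_diff hA (tv_fa hA hμ) hAm hBm hBA
  have := tv_nonneg hA hμ (alg_diff hA hAm hBm)
  linarith

lemma tv_split (hA : IsAlg 𝒜) (hb : IsFinAdd 𝒜 b) (hc : IsFinAdd 𝒜 c) (hAm : A ∈ 𝒜)
    (hsum : ∀ S, a S = b S + c S) : tv 𝒜 a A ≤ tv 𝒜 b A + tv 𝒜 c A := by
  refine tv_le hA (fun B hB hBA => ?_)
  have h1 := tv_mem_le hA hb hAm hB hBA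
  have h2 := tv_mem_le hA hc hAm hB hBA
  rw [hsum B, hsum (A \ B)]
  linarith

lemma tv_le_of_dom (hA : IsAlg 𝒜) (hr : IsFinAdd 𝒜 r) (hAm : A ∈ 𝒜)
    (hdom : ∀ B ∈ 𝒜, |a B| ≤ r B) : tv 𝒜 a A ≤ r A := by
  refine tv_le hA (fun B hB hBA => ?_)
  have h1 := abs_le.1 (hdom B hB)
  have h2 := abs_le.1 (hdom (A \ B) (alg_diff hA hAm hB))
  have e := fa_diff hA hr hAm hB hBA
  linarith [h1.2, h2.1]

/-- for nonneg monotone set functions vanishing at ∅, tv equals the value. -/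
lemma tv_eq_val (hA : IsAlg 𝒜) (hEm : E ∈ 𝒜) (h0 : μ ∅ = 0)
    (hpos : ∀ B ∈ 𝒜, 0 ≤ μ B) (hmono : ∀ B ∈ 𝒜, B ⊆ E → μ B ≤ μ E) :
    tv 𝒜 μ E = μ E := by
  apply le_antisymm
  · refine tv_le hA (fun B hB hBA => ?_)
    have := hpos (E \ B) (alg_diff hA hEm hB)
    have := hmono B hB hBA
    linarith
  · have hbdd : BddAbove {x | ∃ B ∈ 𝒜, B ⊆ E ∧ x = μ B - μ (E \ B)} := by
      refine ⟨μ E, ?_⟩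
      rintro x ⟨B, hB, hBA, rfl⟩
      have := hpos (E \ B) (alg_diff hA hEm hB)
      have := hmono B hB hBA
      linarith
    have : μ E - μ (E \ E) ∈ {x | ∃ B ∈ 𝒜, B ⊆ E ∧ x = μ B - μ (E \ B)} :=
      ⟨E, hEm, subset_rfl, rfl⟩
    have h1 := le_csSup hbdd this
    simpa [tv, Set.diff_self, h0] using h1

/-- finite sums of finitely additive functions. -/
lemma fa_finsetSum {κ : Type*} (t : Finset κ) (f : κ → Set Ω → ℝ)
    (hf : ∀ k ∈ t, IsFinAdd 𝒜 (f k)) : IsFinAdd 𝒜 (fun A => ∑ k ∈ t, f k A) := by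
  classical
  induction t using Finset.induction with
  | empty => exact ⟨by simp, fun A _ B _ _ => by simp, ⟨0, fun A _ => by simp⟩⟩
  | @insert k t' hk ih =>
    have h1 : IsFinAdd 𝒜 (f k) := hf k (Finset.mem_insert_self k t')
    have h2 : IsFinAdd 𝒜 (fun A => ∑ j ∈ t', f j A) :=
      ih (fun j hj => hf j (Finset.mem_insert_of_mem hj))
    obtain ⟨C, hC⟩ := h1.2.2
    obtain ⟨D, hD⟩ := h2.2.2
    refine ⟨?_, ?_, ⟨C + D, fun A hAm => ?_⟩⟩
    · simp only [Finset.sum_insert hk, h1.1]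
      simpa using h2.1
    · intro A hAm B hBm hd
      simp only [Finset.sum_insert hk]
      rw [h1.2.1 A hAm B hBm hd]
      have e2 := h2.2.1 A hAm B hBm hd
      simp only [] at e2
      rw [e2]
      ring
    · simp only [Finset.sum_insert hk]
      calc |f k A + ∑ j ∈ t', f j A| ≤ |f k A| + |∑ j ∈ t', f j A| := abs_add_le _ _
        _ ≤ C + D := add_le_add (hC A hAm) (hD A hAm)

end TV
section Mix

variable {Ω : Type*} {𝒜 : Set (Set Ω)} {μ : Set Ω → ℝ} {A B E : Set Ω}

lemma one_sup_pos (x : ℝ) : (0:ℝ) < 1 ⊔ x := lt_of_lt_of_le one_pos le_sup_left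

lemma nvar_nonneg (hA : IsAlg 𝒜) (hμ : IsFinAdd 𝒜 μ) (hAm : A ∈ 𝒜) :
    0 ≤ nvar 𝒜 μ A :=
  div_nonneg (tv_nonneg hA hμ hAm) (one_sup_pos _).le

lemma nvar_le_one (hA : IsAlg 𝒜) (hμ : IsFinAdd 𝒜 μ) (hAm : A ∈ 𝒜) :
    nvar 𝒜 μ A ≤ 1 := by
  rw [nvar, div_le_one (one_sup_pos _)]
  exact le_trans (tv_mono hA hμ hAm hA.2.1 (Set.subset_univ A)) le_sup_right

lemma nvar_mono (hA : IsAlg 𝒜) (hμ : IsFinAdd 𝒜 μ) (hBm : B ∈ 𝒜) (hAm : A ∈ 𝒜)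
    (hBA : B ⊆ A) : nvar 𝒜 μ B ≤ nvar 𝒜 μ A :=
  div_le_div_of_nonneg_right (tv_mono hA hμ hBm hAm hBA) (one_sup_pos _).le

lemma tv_empty (hA : IsAlg 𝒜) : tv 𝒜 μ ∅ = 0 := by
  rw [tv_eq_dSup]
  have h0 : ∀ B : Set Ω, B ∈ 𝒜 → B ⊆ (∅ : Set Ω) → B = ∅ := fun B _ h => Set.subset_empty_iff.1 h
  unfold dSup
  have e : {x | ∃ B ∈ 𝒜, B ⊆ (∅:Set Ω) ∧ x = μ B + (fun S => -μ S) ((∅:Set Ω) \ B)} = {0} := by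
    ext x
    constructor
    · rintro ⟨B, hB, hBA, rfl⟩
      have : B = ∅ := Set.subset_empty_iff.1 hBA
      subst this
      simp
    · rintro rfl
      exact ⟨∅, hA.1, subset_rfl, by simp⟩
  rw [e, csSup_singleton]

lemma nvar_empty (hA : IsAlg 𝒜) : nvar 𝒜 μ ∅ = 0 := by rw [nvar, tv_empty hA, zero_div]

variable {μs : ℕ → Set Ω → ℝ} {αs : ℕ → ℝ}

lemma mix_summable (hA : IsAlg 𝒜) (hμs : ∀ n, IsFinAdd 𝒜 (μs n)) (hαs : ∀ n, 0 ≤ αs n)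
    (hsum : Summable αs) (hAm : A ∈ 𝒜) :
    Summable (fun n => αs n * nvar 𝒜 (μs n) A) := by
  refine Summable.of_nonneg_of_le
    (fun n => mul_nonneg (hαs n) (nvar_nonneg hA (hμs n) hAm)) (fun n => ?_) hsum
  calc αs n * nvar 𝒜 (μs n) A ≤ αs n * 1 :=
        mul_le_mul_of_nonneg_left (nvar_le_one hA (hμs n) hAm) (hαs n)
    _ = αs n := mul_one _

lemma mix_nonneg (hA : IsAlg 𝒜) (hμs : ∀ n, IsFinAdd 𝒜 (μs n)) (hαs : ∀ n, 0 ≤ αs n)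
    (hAm : A ∈ 𝒜) : 0 ≤ ∑' n, αs n * nvar 𝒜 (μs n) A :=
  tsum_nonneg (fun n => mul_nonneg (hαs n) (nvar_nonneg hA (hμs n) hAm))

lemma mix_le_sum (hA : IsAlg 𝒜) (hμs : ∀ n, IsFinAdd 𝒜 (μs n)) (hαs : ∀ n, 0 ≤ αs n)
    (hsum : Summable αs) (hAm : A ∈ 𝒜) :
    ∑' n, αs n * nvar 𝒜 (μs n) A ≤ ∑' n, αs n := by
  refine Summable.tsum_le_tsum (fun n => ?_) (mix_summable hA hμs hαs hsum hAm) hsum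
  calc αs n * nvar 𝒜 (μs n) A ≤ αs n * 1 :=
        mul_le_mul_of_nonneg_left (nvar_le_one hA (hμs n) hAm) (hαs n)
    _ = αs n := mul_one _

lemma mix_mono (hA : IsAlg 𝒜) (hμs : ∀ n, IsFinAdd 𝒜 (μs n)) (hαs : ∀ n, 0 ≤ αs n)
    (hsum : Summable αs) (hBm : B ∈ 𝒜) (hAm : A ∈ 𝒜) (hBA : B ⊆ A) :
    ∑' n, αs n * nvar 𝒜 (μs n) B ≤ ∑' n, αs n * nvar 𝒜 (μs n) A :=
  Summable.tsum_le_tsum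
    (fun n => mul_le_mul_of_nonneg_left (nvar_mono hA (hμs n) hBm hAm hBA) (hαs n))
    (mix_summable hA hμs hαs hsum hBm) (mix_summable hA hμs hαs hsum hAm)

lemma mix_empty (hA : IsAlg 𝒜) : ∑' n, αs n * nvar 𝒜 (μs n) (∅ : Set Ω) = 0 := by
  simp [nvar_empty hA]

/-- tv of a mixture equals its value. -/
lemma mix_tv_eq (hA : IsAlg 𝒜) (hμs : ∀ n, IsFinAdd 𝒜 (μs n)) (hαs : ∀ n, 0 ≤ αs n)
    (hsum : Summable αs) (hEm : E ∈ 𝒜) :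
    tv 𝒜 (fun A => ∑' n, αs n * nvar 𝒜 (μs n) A) E = ∑' n, αs n * nvar 𝒜 (μs n) E :=
  tv_eq_val hA hEm (mix_empty hA) (fun B hB => mix_nonneg hA hμs hαs hB)
    (fun B hB hBE => mix_mono hA hμs hαs hsum hB hEm hBE)

lemma mix_term_le (hA : IsAlg 𝒜) (hμs : ∀ n, IsFinAdd 𝒜 (μs n)) (hαs : ∀ n, 0 ≤ αs n)
    (hsum : Summable αs) (hAm : A ∈ 𝒜) (k : ℕ) :
    αs k * nvar 𝒜 (μs k) A ≤ ∑' n, αs n * nvar 𝒜 (μs n) A :=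
  Summable.le_tsum (mix_summable hA hμs hαs hsum hAm) k
    (fun n _ => mul_nonneg (hαs n) (nvar_nonneg hA (hμs n) hAm))

end Mix
section GList

variable {Ω : Type*} {ι : Type} {𝒜 : Set (Set Ω)} {F : ι → Set Ω → ℝ} {i₀ : ι}
  {A B : Set Ω}

/-- iterated lattice sup along a list. -/
noncomputable def gList (𝒜 : Set (Set Ω)) (F : ι → Set Ω → ℝ) (i₀ : ι) :
    List ι → Set Ω → ℝ
  | [] => F i₀
  | (i :: L) => dSup 𝒜 (F i) (gList 𝒜 F i₀ L)

lemma gList_fa (hA : IsAlg 𝒜) (hF : ∀ i, IsFinAdd 𝒜 (F i)) :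
    ∀ L : List ι, IsFinAdd 𝒜 (gList 𝒜 F i₀ L) := by
  intro L
  induction L with
  | nil => exact hF i₀
  | cons i L ih => exact dSup_fa hA (hF i) ih

lemma gList_ge (hA : IsAlg 𝒜) (hF : ∀ i, IsFinAdd 𝒜 (F i)) :
    ∀ L : List ι, ∀ j : ι, (j ∈ L ∨ j = i₀) → ∀ A ∈ 𝒜, F j A ≤ gList 𝒜 F i₀ L A := by
  intro L
  induction L with
  | nil =>
    rintro j (hj | rfl) A hAm
    · simp at hj
    · exact le_refl _
  | cons i L ih =>
    rintro j hj A hAm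
    rcases hj with hj | rfl
    · rcases List.mem_cons.1 hj with rfl | hj'
      · exact dSup_ge_g hA (hF j) (gList_fa hA hF L) hAm
      · exact le_trans (ih j (Or.inl hj') A hAm)
          (dSup_ge_h hA (hF i) (gList_fa hA hF L) hAm)
    · exact le_trans (ih _ (Or.inr rfl) A hAm)
        (dSup_ge_h hA (hF i) (gList_fa hA hF L) hAm)

lemma gList_le (hA : IsAlg 𝒜) (hF : ∀ i, IsFinAdd 𝒜 (F i)) {ρ : Set Ω → ℝ}
    (hρ : IsFinAdd 𝒜 ρ) :
    ∀ L : List ι, (∀ j ∈ L, ∀ A ∈ 𝒜, F j A ≤ ρ A) → (∀ A ∈ 𝒜, F i₀ A ≤ ρ A) →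
      ∀ A ∈ 𝒜, gList 𝒜 F i₀ L A ≤ ρ A := by
  intro L
  induction L with
  | nil => intro _ h0 A hAm; exact h0 A hAm
  | cons i L ih =>
    intro hmem h0 A hAm
    refine dSup_le_rho hA hρ hAm (fun B hB => hmem i List.mem_cons_self B hB)
      (fun B hB => ih (fun j hj => hmem j (List.mem_cons_of_mem i hj)) h0 B hB)

/-- pointwise sup over all finite lists. -/
noncomputable def supList (𝒜 : Set (Set Ω)) (F : ι → Set Ω → ℝ) (i₀ : ι) (A : Set Ω) : ℝ :=
  sSup {x | ∃ L : List ι, x = gList 𝒜 F i₀ L A}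

lemma supList_set_nonempty (A : Set Ω) :
    {x | ∃ L : List ι, x = gList 𝒜 F i₀ L A}.Nonempty := ⟨_, [], rfl⟩

variable {ρ : Set Ω → ℝ}

lemma supList_bdd (hA : IsAlg 𝒜) (hF : ∀ i, IsFinAdd 𝒜 (F i)) (hρ : IsFinAdd 𝒜 ρ)
    (hub : ∀ j, ∀ A ∈ 𝒜, F j A ≤ ρ A) (hAm : A ∈ 𝒜) :
    BddAbove {x | ∃ L : List ι, x = gList 𝒜 F i₀ L A} := by
  refine ⟨ρ A, ?_⟩
  rintro x ⟨L, rfl⟩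
  exact gList_le hA hF hρ L (fun j _ => hub j) (hub i₀) A hAm

lemma supList_le (hA : IsAlg 𝒜) (hF : ∀ i, IsFinAdd 𝒜 (F i)) (hρ : IsFinAdd 𝒜 ρ)
    (hub : ∀ j, ∀ A ∈ 𝒜, F j A ≤ ρ A) (hAm : A ∈ 𝒜) :
    supList 𝒜 F i₀ A ≤ ρ A := by
  refine csSup_le (supList_set_nonempty A) ?_
  rintro x ⟨L, rfl⟩
  exact gList_le hA hF hρ L (fun j _ => hub j) (hub i₀) A hAm

lemma gList_le_supList (hA : IsAlg 𝒜) (hF : ∀ i, IsFinAdd 𝒜 (F i)) (hρ : IsFinAdd 𝒜 ρ)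
    (hub : ∀ j, ∀ A ∈ 𝒜, F j A ≤ ρ A) (hAm : A ∈ 𝒜) (L : List ι) :
    gList 𝒜 F i₀ L A ≤ supList 𝒜 F i₀ A :=
  le_csSup (supList_bdd hA hF hρ hub hAm) ⟨L, rfl⟩

lemma supList_ge (hA : IsAlg 𝒜) (hF : ∀ i, IsFinAdd 𝒜 (F i)) (hρ : IsFinAdd 𝒜 ρ)
    (hub : ∀ j, ∀ A ∈ 𝒜, F j A ≤ ρ A) (hAm : A ∈ 𝒜) (j : ι) :
    F j A ≤ supList 𝒜 F i₀ A :=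
  le_trans (gList_ge hA hF [j] j (Or.inl (List.mem_singleton_self j)) A hAm)
    (gList_le_supList hA hF hρ hub hAm [j])

lemma gList_mono_append (hA : IsAlg 𝒜) (hF : ∀ i, IsFinAdd 𝒜 (F i)) (hAm : A ∈ 𝒜)
    (L₁ L₂ : List ι) : gList 𝒜 F i₀ L₁ A ≤ gList 𝒜 F i₀ (L₁ ++ L₂) A := by
  refine gList_le hA hF (gList_fa hA hF (L₁ ++ L₂)) L₁ (fun j hj B hB =>
    gList_ge hA hF (L₁ ++ L₂) j (Or.inl (List.mem_append_left L₂ hj)) B hB)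
    (fun B hB => gList_ge hA hF (L₁ ++ L₂) i₀ (Or.inr rfl) B hB) A hAm

lemma gList_mono_append' (hA : IsAlg 𝒜) (hF : ∀ i, IsFinAdd 𝒜 (F i)) (hAm : A ∈ 𝒜)
    (L₁ L₂ : List ι) : gList 𝒜 F i₀ L₂ A ≤ gList 𝒜 F i₀ (L₁ ++ L₂) A := by
  refine gList_le hA hF (gList_fa hA hF (L₁ ++ L₂)) L₂ (fun j hj B hB =>
    gList_ge hA hF (L₁ ++ L₂) j (Or.inl (List.mem_append_right L₁ hj)) B hB)
    (fun B hB => gList_ge hA hF (L₁ ++ L₂) i₀ (Or.inr rfl) B hB) A hAm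

lemma supList_fa (hA : IsAlg 𝒜) (hF : ∀ i, IsFinAdd 𝒜 (F i)) (hρ : IsFinAdd 𝒜 ρ)
    (hub : ∀ j, ∀ A ∈ 𝒜, F j A ≤ ρ A) : IsFinAdd 𝒜 (supList 𝒜 F i₀) := by
  obtain ⟨C, hC⟩ := hρ.2.2
  obtain ⟨D, hD⟩ := (hF i₀).2.2
  refine ⟨?_, ?_, ⟨C ⊔ D, fun A hAm => abs_le.2 ⟨?_, ?_⟩⟩⟩
  · -- supList ∅ = 0
    have e : {x | ∃ L : List ι, x = gList 𝒜 F i₀ L (∅ : Set Ω)} = {0} := by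
      ext x
      constructor
      · rintro ⟨L, rfl⟩
        exact (gList_fa hA hF L).1
      · rintro rfl
        exact ⟨[], (hF i₀).1.symm⟩
    unfold supList
    rw [e, csSup_singleton]
  · -- additivity
    intro A hAm B hBm hd
    have hABm : A ∪ B ∈ 𝒜 := hA.2.2.2 _ hAm _ hBm
    apply le_antisymm
    · refine csSup_le (supList_set_nonempty _) ?_
      rintro x ⟨L, rfl⟩
      rw [(gList_fa hA hF L).2.1 A hAm B hBm hd]
      exact add_le_add (gList_le_supList hA hF hρ hub hAm L)
        (gList_le_supList hA hF hρ hub hBm L)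
    · have step : ∀ L₁ : List ι,
          gList 𝒜 F i₀ L₁ A + supList 𝒜 F i₀ B ≤ supList 𝒜 F i₀ (A ∪ B) := by
        intro L₁
        have : supList 𝒜 F i₀ B ≤ supList 𝒜 F i₀ (A ∪ B) - gList 𝒜 F i₀ L₁ A := by
          refine csSup_le (supList_set_nonempty _) ?_
          rintro y ⟨L₂, rfl⟩
          have k1 : gList 𝒜 F i₀ L₁ A + gList 𝒜 F i₀ L₂ B ≤
              gList 𝒜 F i₀ (L₁ ++ L₂) (A ∪ B) := by
            rw [(gList_fa hA hF (L₁ ++ L₂)).2.1 A hAm B hBm hd]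
            exact add_le_add (gList_mono_append hA hF hAm L₁ L₂)
              (gList_mono_append' hA hF hBm L₁ L₂)
          have k2 := gList_le_supList (i₀ := i₀) hA hF hρ hub hABm (L₁ ++ L₂)
          linarith
        linarith
      have : supList 𝒜 F i₀ A ≤ supList 𝒜 F i₀ (A ∪ B) - supList 𝒜 F i₀ B := by
        refine csSup_le (supList_set_nonempty _) ?_
        rintro x ⟨L₁, rfl⟩
        have := step L₁
        linarith
      linarith
  · -- lower bound
    have h1 : F i₀ A ≤ supList 𝒜 F i₀ A := supList_ge hA hF hρ hub hAm i₀
    have h2 := (abs_le.1 (hD A hAm)).1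
    have : -D ≤ supList 𝒜 F i₀ A := by linarith
    have h3 : D ≤ C ⊔ D := le_sup_right
    linarith
  · exact le_trans (supList_le hA hF hρ hub hAm) (le_trans (le_abs_self _)
      (le_trans (hC A hAm) le_sup_left))

end GList
section WSum

lemma hgeo_half : HasSum (fun n : ℕ => ((1:ℝ)/2)^(n+1)) 1 := by
  have h := hasSum_geometric_two.mul_left (1/2 : ℝ)
  have e : (fun n : ℕ => (1/2:ℝ) * (1/2)^n) = fun n : ℕ => ((1:ℝ)/2)^(n+1) := by
    funext nn; rw [pow_succ]; ring
  rw [e] at h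
  norm_num at h
  exact h

lemma w_hasSum : HasSum (fun p : ℕ × ℕ => ((1:ℝ)/2)^(p.1+1) * ((1:ℝ)/2)^(p.2+1)) 1 := by
  have hsummw : Summable (fun p : ℕ × ℕ => ((1:ℝ)/2)^(p.1+1) * ((1:ℝ)/2)^(p.2+1)) := by
    refine (summable_prod_of_nonneg (fun p => by positivity)).2 ⟨fun p => ?_, ?_⟩
    · show Summable fun y : ℕ => ((1:ℝ)/2)^(p+1) * ((1:ℝ)/2)^(y+1)
      exact hgeo_half.summable.mul_left _
    · have e : (fun p : ℕ => ∑' l : ℕ, ((1:ℝ)/2)^(p+1) * ((1:ℝ)/2)^(l+1)) =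
          fun p : ℕ => ((1:ℝ)/2)^(p+1) := by
        funext p
        rw [tsum_mul_left, hgeo_half.tsum_eq, mul_one]
      show Summable fun p : ℕ => ∑' l : ℕ, ((1:ℝ)/2)^(p+1) * ((1:ℝ)/2)^(l+1)
      exact e ▸ hgeo_half.summable
  have h := hgeo_half.mul hgeo_half hsummw
  simpa using h

end WSum

set_option maxHeartbeats 1000000 in
/-- 𝐋(M) is a band (normal sublattice) of ba(𝒜): solid and closed
under existing suprema of arbitrary nonempty families. -/
theorem lm_is_band {Ω : Type*} [Nonempty Ω] (𝒜 : Set (Set Ω)) (hA : IsAlg 𝒜)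
    (M : Set (Set Ω → ℝ)) (hM : ∀ μ ∈ M, IsFinAdd 𝒜 μ) :
    (∀ ν ν₁ : Set Ω → ℝ, IsFinAdd 𝒜 ν → IsFinAdd 𝒜 ν₁ →
      (∀ A ∈ 𝒜, tv 𝒜 ν₁ A ≤ tv 𝒜 ν A) → MemLM 𝒜 M ν → MemLM 𝒜 M ν₁) ∧
    (∀ (ι : Type) (F : ι → Set Ω → ℝ), Nonempty ι →
      (∀ i, IsFinAdd 𝒜 (F i) ∧ MemLM 𝒜 M (F i)) →
      ∀ ν : Set Ω → ℝ, IsFinAdd 𝒜 ν →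
        (∀ i, baLE 𝒜 (F i) ν) →
        (∀ ρ : Set Ω → ℝ, IsFinAdd 𝒜 ρ → (∀ i, baLE 𝒜 (F i) ρ) → baLE 𝒜 ν ρ) →
        MemLM 𝒜 M ν) := by
  constructor
  · -- solidity
    rintro ν ν₁ hν hν₁ hle ⟨m, hmAM, hmAC⟩
    refine ⟨m, hmAM, fun ε hε => ?_⟩
    obtain ⟨δ, hδ, hprop⟩ := hmAC ε hε
    exact ⟨δ, hδ, fun E hE htv => lt_of_le_of_lt (hle E hE) (hprop E hE htv)⟩
  · -- closure under existing suprema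
    intro ι F hι hF ν hν hub hlub
    obtain ⟨i₀⟩ := hι
    have hFA : ∀ i, IsFinAdd 𝒜 (F i) := fun i => (hF i).1
    choose mm hAM hACF using fun i => (hF i).2
    choose μs αs hμsM hαsnn hαsum hform using hAM
    have hμsFA : ∀ i nn, IsFinAdd 𝒜 (μs i nn) := fun i nn => hM _ (hμsM i nn)
    -- ν agrees with the pointwise sup of finite lattice sups
    have hubν : ∀ j, ∀ A ∈ 𝒜, F j A ≤ ν A := fun j A hAm => hub j A hAm
    have hsfa : IsFinAdd 𝒜 (supList 𝒜 F i₀) := supList_fa hA hFA hν hubν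
    have hsub : ∀ i, baLE 𝒜 (F i) (supList 𝒜 F i₀) := fun i A hAm =>
      supList_ge hA hFA hν hubν hAm i
    have hνs : ∀ A ∈ 𝒜, ν A = supList 𝒜 F i₀ A := fun A hAm =>
      le_antisymm (hlub _ hsfa hsub A hAm) (supList_le hA hFA hν hubν hAm)
    -- select approximating lists
    have hsel : ∀ n : ℕ, ∃ L : List ι,
        ν Set.univ - 1/(n+1) < gList 𝒜 F i₀ L Set.univ := by
      intro n
      have hp : (0:ℝ) < 1/(n+1) := by positivity
      have h1 : ν Set.univ - 1/(n+1) < supList 𝒜 F i₀ Set.univ := by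
        rw [← hνs _ hA.2.1]; linarith
      obtain ⟨x, ⟨L, rfl⟩, hx⟩ := exists_lt_of_lt_csSup (supList_set_nonempty _) h1
      exact ⟨L, hx⟩
    choose LL hLL using hsel
    -- the countable mixture m
    set idx : ℕ × ℕ → ι := fun p => (LL p.1).getD p.2 i₀ with hidx
    set w : ℕ × ℕ → ℝ := fun p => ((1:ℝ)/2)^(p.1+1) * ((1:ℝ)/2)^(p.2+1) with hwdef
    have hwpos : ∀ p : ℕ × ℕ, 0 < w p := fun p => by
      show (0:ℝ) < ((1:ℝ)/2)^(p.1+1) * ((1:ℝ)/2)^(p.2+1)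
      positivity
    have hwsum : HasSum w 1 := by rw [hwdef]; exact w_hasSum
    obtain ⟨eqv⟩ : Nonempty (ℕ ≃ (ℕ × ℕ) × ℕ) := ⟨(Denumerable.eqv ((ℕ × ℕ) × ℕ)).symm⟩
    set f : (ℕ × ℕ) × ℕ → ℝ := fun q => w q.1 * αs (idx q.1) q.2 with hfdef
    set μF : ℕ → Set Ω → ℝ := fun j => μs (idx (eqv j).1) (eqv j).2 with hμFdef
    set αF : ℕ → ℝ := fun j => f (eqv j) with hαFdef
    have hfnn : ∀ q, 0 ≤ f q := fun q => mul_nonneg (hwpos q.1).le (hαsnn _ _)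
    have hslice : ∀ p : ℕ × ℕ, Summable (fun l => f (p, l)) := by
      intro p
      show Summable fun l => w p * αs (idx p) l
      exact (hαsum (idx p)).summable.mul_left (w p)
    have houter : (fun p : ℕ × ℕ => ∑' l, f (p, l)) = w := by
      funext p
      show (∑' l, w p * αs (idx p) l) = w p
      rw [tsum_mul_left, (hαsum (idx p)).tsum_eq, mul_one]
    have hfsumm : Summable f :=
      (summable_prod_of_nonneg hfnn).2 ⟨hslice, by rw [houter]; exact hwsum.summable⟩
    have hfsum1 : HasSum f 1 := by
      have h1 := hfsumm.hasSum
      have h2 : ∑' q, f q = 1 := by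
        rw [Summable.tsum_prod' hfsumm hslice]
        rw [tsum_congr (fun b => congrFun houter b), hwsum.tsum_eq]
      rwa [h2] at h1
    have hαFsum : HasSum αF 1 := eqv.hasSum_iff.2 hfsum1
    have hμFfa : ∀ j, IsFinAdd 𝒜 (μF j) := fun j => hμsFA _ _
    have hμFM : ∀ j, μF j ∈ M := fun j => hμsM _ _
    have hαFnn : ∀ j, 0 ≤ αF j := fun j => hfnn _
    set m : Set Ω → ℝ := fun A => ∑' j, αF j * nvar 𝒜 (μF j) A with hmdef
    refine ⟨m, ⟨μF, αF, hμFM, hαFnn, hαFsum, fun A => rfl⟩, ?_⟩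
    -- quantitative facts
    have hmm_tv_le : ∀ i, ∀ E ∈ 𝒜, tv 𝒜 (mm i) E ≤ mm i E := by
      intro i E hE
      have e2 : mm i = fun A => ∑' nn, αs i nn * nvar 𝒜 (μs i nn) A := funext (hform i)
      rw [e2]
      exact le_of_eq (mix_tv_eq hA (hμsFA i) (hαsnn i) (hαsum i).summable hE)
    have hm_tv_ge : ∀ E ∈ 𝒜, m E ≤ tv 𝒜 m E := fun E hE =>
      (mix_tv_eq hA hμFfa hαFnn hαFsum.summable hE).ge
    have hmm_nonneg : ∀ i, ∀ E ∈ 𝒜, 0 ≤ mm i E := fun i E hE => by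
      rw [hform i E]; exact mix_nonneg hA (hμsFA i) (hαsnn i) hE
    -- slice estimate
    have hslice_le : ∀ E ∈ 𝒜, ∀ p : ℕ × ℕ, w p * mm (idx p) E ≤ m E := by
      intro E hE p
      set fE : (ℕ × ℕ) × ℕ → ℝ := fun q => f q * nvar 𝒜 (μs (idx q.1) q.2) E with hfE
      have hfEnn : ∀ q, 0 ≤ fE q :=
        fun q => mul_nonneg (hfnn q) (nvar_nonneg hA (hμsFA _ _) hE)
      have hsummE : Summable fE := by
        have h1 : Summable (fun j => αF j * nvar 𝒜 (μF j) E) :=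
          mix_summable hA hμFfa hαFnn hαFsum.summable hE
        have h2 : Summable (fE ∘ eqv) := by
          refine h1.congr (fun j => ?_)
          show αF j * nvar 𝒜 (μF j) E = fE (eqv j)
          rfl
        exact eqv.summable_iff.1 h2
      have hsliceE : ∀ p' : ℕ × ℕ, Summable (fun l => fE (p', l)) := fun p' =>
        ((summable_prod_of_nonneg hfEnn).1 hsummE).1 p'
      have hinner : ∀ p' : ℕ × ℕ, ∑' l, fE (p', l) = w p' * mm (idx p') E := by
        intro p'
        rw [hform (idx p') E, ← tsum_mul_left]
        refine tsum_congr (fun l => ?_)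
        show (w p' * αs (idx p') l) * nvar 𝒜 (μs (idx p') l) E =
          w p' * (αs (idx p') l * nvar 𝒜 (μs (idx p') l) E)
        ring
      have hmE : m E = ∑' (p' : ℕ × ℕ), w p' * mm (idx p') E := by
        have e0 : m E = ∑' q, fE q := by
          rw [← eqv.tsum_eq fE]
        rw [e0, Summable.tsum_prod' hsummE hsliceE]
        exact tsum_congr (fun p' => hinner p')
      have houtE : Summable (fun p' : ℕ × ℕ => w p' * mm (idx p') E) := by
        have := ((summable_prod_of_nonneg hfEnn).1 hsummE).2
        refine this.congr (fun p' => hinner p')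
      rw [hmE]
      exact Summable.le_tsum houtE p (fun q _ => mul_nonneg (hwpos q).le (hmm_nonneg _ E hE))
    -- the ε-δ argument
    intro ε hε
    obtain ⟨n, hn⟩ := exists_nat_one_div_lt (show (0:ℝ) < ε/2 by linarith)
    set L := LL n with hLdef
    set len := L.length with hlendef
    have hε' : (0:ℝ) < ε / (2*(len+1)) := by positivity
    have hACk : ∀ k : ℕ, ∃ δ > (0:ℝ), ∀ E ∈ 𝒜, tv 𝒜 (mm (idx (n,k))) E < δ →
        tv 𝒜 (F (idx (n,k))) E < ε/(2*(len+1)) := fun k => hACF (idx (n,k)) _ hε'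
    choose δk hδkpos hδk using hACk
    set t := Finset.range (len+1) with htdef
    have htne : t.Nonempty := ⟨0, by simp [htdef]⟩
    set δ := t.inf' htne (fun k => w (n,k) * δk k) with hδdef
    have hδpos : 0 < δ :=
      (Finset.lt_inf'_iff htne).2 (fun k _ => mul_pos (hwpos (n,k)) (hδkpos k))
    refine ⟨δ, hδpos, fun E hE htvm => ?_⟩
    have hmE : m E < δ := lt_of_le_of_lt (hm_tv_ge E hE) htvm
    have hFk : ∀ k ∈ t, tv 𝒜 (F (idx (n,k))) E < ε/(2*(len+1)) := by
      intro k hk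
      apply hδk k E hE
      have h1 : w (n,k) * mm (idx (n,k)) E ≤ m E := hslice_le E hE (n,k)
      have h2 : δ ≤ w (n,k) * δk k := Finset.inf'_le _ hk
      have h4 : w (n,k) * mm (idx (n,k)) E < w (n,k) * δk k := by linarith
      have h5 := (mul_lt_mul_iff_right₀ (hwpos (n,k))).1 h4
      exact lt_of_le_of_lt (hmm_tv_le _ E hE) h5
    set r : Set Ω → ℝ := fun A => ∑ k ∈ t, tv 𝒜 (F (idx (n,k))) A with hrdef
    have hrfa : IsFinAdd 𝒜 r := fa_finsetSum t _ (fun k _ => tv_fa hA (hFA _))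
    have hkey : ∀ j, (j ∈ L ∨ j = i₀) → ∃ k ∈ t, idx (n,k) = j := by
      rintro j (hj | rfl)
      · obtain ⟨k, hk, hkj⟩ := List.mem_iff_getElem.1 hj
        refine ⟨k, Finset.mem_range.2 (by omega), ?_⟩
        show L.getD k i₀ = j
        rw [List.getD_eq_getElem _ _ hk]
        exact hkj
      · refine ⟨len, Finset.mem_range.2 (by omega), ?_⟩
        show L.getD len _ = _
        exact List.getD_eq_default _ _ (le_refl _)
    have htvr : ∀ j, (j ∈ L ∨ j = i₀) → ∀ B ∈ 𝒜, tv 𝒜 (F j) B ≤ r B := by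
      intro j hj B hB
      obtain ⟨k, hk, hkj⟩ := hkey j hj
      calc tv 𝒜 (F j) B = tv 𝒜 (F (idx (n,k))) B := by rw [hkj]
        _ ≤ ∑ k' ∈ t, tv 𝒜 (F (idx (n,k'))) B :=
            Finset.single_le_sum (f := fun k' => tv 𝒜 (F (idx (n,k'))) B)
              (fun k' _ => tv_nonneg hA (hFA _) hB) hk
        _ = r B := rfl
    have hdom : ∀ B ∈ 𝒜, |gList 𝒜 F i₀ L B| ≤ r B := by
      intro B hB
      refine abs_le.2 ⟨?_, ?_⟩
      · have h1 : F i₀ B ≤ gList 𝒜 F i₀ L B := gList_ge hA hFA L i₀ (Or.inr rfl) B hB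
        have h2 : -F i₀ B ≤ tv 𝒜 (F i₀) B := tv_ge_neg_self hA (hFA i₀) hB
        have h3 := htvr i₀ (Or.inr rfl) B hB
        linarith
      · refine gList_le hA hFA hrfa L (fun j hj B' hB' => ?_) (fun B' hB' => ?_) B hB
        · exact le_trans (tv_ge_self hA (hFA j) hB') (htvr j (Or.inl hj) B' hB')
        · exact le_trans (tv_ge_self hA (hFA i₀) hB') (htvr i₀ (Or.inr rfl) B' hB')
    have h5 : tv 𝒜 (gList 𝒜 F i₀ L) E ≤ r E := tv_le_of_dom hA hrfa hE hdom
    have h6 : r E < ε/2 := by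
      have hlt := Finset.sum_lt_sum_of_nonempty htne hFk
      have hcard : ∑ _k ∈ t, ε/(2*(len+1)) = (len+1) * (ε/(2*(len+1))) := by
        rw [Finset.sum_const, htdef, Finset.card_range, nsmul_eq_mul]
        push_cast
        ring
      have hval : ((len:ℝ)+1) * (ε/(2*(len+1))) = ε/2 := by
        have : ((len:ℝ)+1) ≠ 0 := by positivity
        field_simp
      rw [hrdef]
      calc ∑ k ∈ t, tv 𝒜 (F (idx (n,k))) E < ∑ _k ∈ t, ε/(2*(len+1)) := hlt
        _ = ε/2 := by rw [hcard]; push_cast; rw [hval]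
    set d : Set Ω → ℝ := fun S => ν S - gList 𝒜 F i₀ L S with hddef
    have hgfa : IsFinAdd 𝒜 (gList 𝒜 F i₀ L) := gList_fa hA hFA L
    have hdfa : IsFinAdd 𝒜 d := fa_sub hν hgfa
    have hdpos : ∀ B ∈ 𝒜, 0 ≤ d B := by
      intro B hB
      have := gList_le hA hFA hν L (fun j _ => hub j) (hub i₀) B hB
      show (0:ℝ) ≤ ν B - gList 𝒜 F i₀ L B
      linarith
    have hdmono : ∀ B ∈ 𝒜, d B ≤ d Set.univ := by
      intro B hB
      have e := fa_diff hA hdfa hA.2.1 hB (Set.subset_univ B)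
      have := hdpos _ (alg_diff hA hA.2.1 hB)
      linarith
    have h7 : tv 𝒜 d E ≤ d Set.univ := by
      refine tv_le hA (fun B hB hBE => ?_)
      have h8 : 0 ≤ d (E \ B) := hdpos _ (alg_diff hA hE hB)
      have h9 : d B ≤ d Set.univ := hdmono B hB
      linarith
    have h10 : d Set.univ < 1/(n+1) := by
      have hL0 := hLL n
      rw [← hLdef] at hL0
      show ν Set.univ - gList 𝒜 F i₀ L Set.univ < 1/(n+1)
      linarith
    have h11 : tv 𝒜 ν E ≤ tv 𝒜 (gList 𝒜 F i₀ L) E + tv 𝒜 d E :=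
      tv_split hA hgfa hdfa hE (fun S => by
        show ν S = gList 𝒜 F i₀ L S + (ν S - gList 𝒜 F i₀ L S)
        ring)
    have hfin : tv 𝒜 ν E < ε/2 + ε/2 :=
      lt_of_le_of_lt (le_trans h11 (add_le_add h5 h7)) (add_lt_add h6 (lt_trans h10 hn))
    linarith [hfin]
end

section
/- Let A be an algebra over Ω and M ⊆ ba(A) be dominated by λ ∈ ba(A)₊. If λ dominates M, then the component λᶜ of λ in the Lebesgue-type decomposition λ = λᶜ + λ⊥ (with λᶜ ∈ L(M) and λ⊥ singular to A(M)) also dominates M: every μ ∈ M is absolutely continuous with respect to λᶜ. -/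
open Set Filter Topology

variable {Ω : Type*}

section TVHelpers

variable {𝒜 : Set (Set Ω)}

lemma alg_compl_mem (hA : IsAlg 𝒜) {A : Set Ω} (h : A ∈ 𝒜) : Aᶜ ∈ 𝒜 := hA.2.2.1 A h

lemma alg_diff_mem (hA : IsAlg 𝒜) {A B : Set Ω} (h1 : A ∈ 𝒜) (h2 : B ∈ 𝒜) :
    A \ B ∈ 𝒜 := by
  have he : A \ B = (Aᶜ ∪ B)ᶜ := by ext x; simp [Set.mem_diff]
  rw [he]
  exact hA.2.2.1 _ (hA.2.2.2 _ (hA.2.2.1 _ h1) _ h2)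

lemma alg_inter_mem (hA : IsAlg 𝒜) {A B : Set Ω} (h1 : A ∈ 𝒜) (h2 : B ∈ 𝒜) :
    A ∩ B ∈ 𝒜 := by
  have he : A ∩ B = A \ Bᶜ := by ext x; simp
  rw [he]; exact alg_diff_mem hA h1 (hA.2.2.1 _ h2)

lemma mem_tvSet {f : Set Ω → ℝ} {E B : Set Ω} (hB : B ∈ 𝒜) (hBE : B ⊆ E) :
    f B - f (E \ B) ∈ {x | ∃ B ∈ 𝒜, B ⊆ E ∧ x = f B - f (E \ B)} :=
  ⟨B, hB, hBE, rfl⟩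

lemma tv_bddAbove (hA : IsAlg 𝒜) {f : Set Ω → ℝ} {C : ℝ}
    (hbd : ∀ A ∈ 𝒜, |f A| ≤ C) {E : Set Ω} (hE : E ∈ 𝒜) :
    BddAbove {x | ∃ B ∈ 𝒜, B ⊆ E ∧ x = f B - f (E \ B)} := by
  refine ⟨2 * C, fun x hx => ?_⟩
  obtain ⟨B, hB, hBE, rfl⟩ := hx
  have h1 := hbd B hB
  have h2 := hbd (E \ B) (alg_diff_mem hA hE hB)
  have := abs_sub (f B) (f (E \ B))
  calc f B - f (E \ B) ≤ |f B| + |f (E \ B)| := by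
        have := abs_nonneg (f (E \ B)); have := le_abs_self (f B)
        have := neg_abs_le (f (E \ B)); linarith
    _ ≤ 2 * C := by linarith

lemma le_tv (hA : IsAlg 𝒜) {f : Set Ω → ℝ} {C : ℝ}
    (hbd : ∀ A ∈ 𝒜, |f A| ≤ C) {E B : Set Ω} (hE : E ∈ 𝒜) (hB : B ∈ 𝒜) (hBE : B ⊆ E) :
    f B - f (E \ B) ≤ tv 𝒜 f E :=
  le_csSup (tv_bddAbove hA hbd hE) (mem_tvSet hB hBE)

lemma tv_nonneg_s3 (hA : IsAlg 𝒜) {f : Set Ω → ℝ} (hf : IsFinAdd 𝒜 f) {E : Set Ω}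
    (hE : E ∈ 𝒜) : 0 ≤ tv 𝒜 f E := by
  obtain ⟨C, hC⟩ := hf.2.2
  have h1 : f E - f (E \ E) ≤ tv 𝒜 f E := le_tv hA hC hE hE le_rfl
  have h2 : f ∅ - f (E \ ∅) ≤ tv 𝒜 f E := le_tv hA hC hE hA.1 (Set.empty_subset E)
  rw [Set.diff_self] at h1
  rw [Set.diff_empty] at h2
  rw [hf.1] at h1 h2
  linarith [abs_nonneg (f E), le_abs_self (f E), neg_abs_le (f E)]

lemma tv_le_bound (hA : IsAlg 𝒜) {f : Set Ω → ℝ} {C : ℝ}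
    (hbd : ∀ A ∈ 𝒜, |f A| ≤ C) {E : Set Ω} (hE : E ∈ 𝒜) :
    tv 𝒜 f E ≤ 2 * C := by
  have hC0 : 0 ≤ C := le_trans (abs_nonneg _) (hbd ∅ hA.1)
  refine Real.sSup_le (fun x hx => ?_) (by linarith)
  obtain ⟨B, hB, hBE, rfl⟩ := hx
  have h1 := hbd B hB
  have h2 := hbd (E \ B) (alg_diff_mem hA hE hB)
  have := le_abs_self (f B); have := neg_abs_le (f (E \ B)); linarith

lemma tv_empty_s3 {f : Set Ω → ℝ} (hA : IsAlg 𝒜) (hf : IsFinAdd 𝒜 f) :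
    tv 𝒜 f ∅ = 0 := by
  have hset : {x | ∃ B ∈ 𝒜, B ⊆ (∅ : Set Ω) ∧ x = f B - f (∅ \ B)} = {0} := by
    ext x
    constructor
    · rintro ⟨B, hB, hBE, rfl⟩
      have : B = ∅ := Set.subset_empty_iff.mp hBE
      simp [this, hf.1]
    · rintro rfl
      exact ⟨∅, hA.1, le_rfl, by simp [hf.1]⟩
  rw [tv, hset, csSup_singleton]

lemma tv_mono_s3 (hA : IsAlg 𝒜) {f : Set Ω → ℝ} (hf : IsFinAdd 𝒜 f) {E F : Set Ω}
    (hE : E ∈ 𝒜) (hF : F ∈ 𝒜) (hEF : E ⊆ F) : tv 𝒜 f E ≤ tv 𝒜 f F := by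
  obtain ⟨C, hC⟩ := hf.2.2
  refine Real.sSup_le (fun x hx => ?_) (tv_nonneg_s3 hA hf hF)
  obtain ⟨B, hB, hBE, rfl⟩ := hx
  have hFE : F \ E ∈ 𝒜 := alg_diff_mem hA hF hE
  rcases le_or_gt 0 (f (F \ E)) with hpos | hneg
  · -- use B' = B ∪ (F \ E)
    have hB' : B ∪ (F \ E) ∈ 𝒜 := hA.2.2.2 _ hB _ hFE
    have hB'F : B ∪ (F \ E) ⊆ F := Set.union_subset (hBE.trans hEF) Set.diff_subset
    have hkey : f (B ∪ (F \ E)) - f (F \ (B ∪ (F \ E))) ≤ tv 𝒜 f F :=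
      le_tv hA hC hF hB' hB'F
    have hdisj : Disjoint B (F \ E) :=
      Set.disjoint_left.mpr fun a haB haFE => haFE.2 (hBE haB)
    have hadd : f (B ∪ (F \ E)) = f B + f (F \ E) := hf.2.1 _ hB _ hFE hdisj
    have hsets : F \ (B ∪ (F \ E)) = E \ B := by
      ext x
      simp only [Set.mem_diff, Set.mem_union, not_or, not_and, not_not]
      constructor
      · rintro ⟨hxF, hxB, himp⟩; exact ⟨himp hxF, hxB⟩
      · rintro ⟨hxE, hxB⟩; exact ⟨hEF hxE, hxB, fun _ => hxE⟩
    rw [hadd, hsets] at hkey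
    linarith
  · have hkey : f B - f (F \ B) ≤ tv 𝒜 f F := le_tv hA hC hF hB (hBE.trans hEF)
    have hsets : F \ B = (E \ B) ∪ (F \ E) := by
      ext x
      simp only [Set.mem_diff, Set.mem_union]
      constructor
      · rintro ⟨hxF, hxB⟩
        by_cases hxE : x ∈ E
        · exact Or.inl ⟨hxE, hxB⟩
        · exact Or.inr ⟨hxF, hxE⟩
      · rintro (⟨hxE, hxB⟩ | ⟨hxF, hxE⟩)
        · exact ⟨hEF hxE, hxB⟩
        · exact ⟨hxF, fun hxB => hxE (hBE hxB)⟩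
    have hdisj : Disjoint (E \ B) (F \ E) :=
      Set.disjoint_left.mpr fun a ha hb => hb.2 ha.1
    have hadd : f (F \ B) = f (E \ B) + f (F \ E) := by
      rw [hsets]; exact hf.2.1 _ (alg_diff_mem hA hE hB) _ hFE hdisj
    rw [hadd] at hkey
    linarith

lemma tv_union_le (hA : IsAlg 𝒜) {f : Set Ω → ℝ} (hf : IsFinAdd 𝒜 f) {E1 E2 : Set Ω}
    (h1 : E1 ∈ 𝒜) (h2 : E2 ∈ 𝒜) (hd : Disjoint E1 E2) :
    tv 𝒜 f (E1 ∪ E2) ≤ tv 𝒜 f E1 + tv 𝒜 f E2 := by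
  obtain ⟨C, hC⟩ := hf.2.2
  have hu : E1 ∪ E2 ∈ 𝒜 := hA.2.2.2 _ h1 _ h2
  refine Real.sSup_le (fun x hx => ?_) (by
    linarith [tv_nonneg_s3 hA hf h1, tv_nonneg_s3 hA hf h2])
  obtain ⟨B, hB, hBE, rfl⟩ := hx
  have hB1 : B ∩ E1 ∈ 𝒜 := alg_inter_mem hA hB h1
  have hB2 : B ∩ E2 ∈ 𝒜 := alg_inter_mem hA hB h2
  have hsplitB : B = (B ∩ E1) ∪ (B ∩ E2) := by
    rw [← Set.inter_union_distrib_left]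
    exact (Set.inter_eq_left.mpr hBE).symm
  have hdB : Disjoint (B ∩ E1) (B ∩ E2) :=
    hd.mono Set.inter_subset_right Set.inter_subset_right
  have haddB : f B = f (B ∩ E1) + f (B ∩ E2) := by
    conv_lhs => rw [hsplitB]
    exact hf.2.1 _ hB1 _ hB2 hdB
  have hsplitD : (E1 ∪ E2) \ B = (E1 \ B) ∪ (E2 \ B) := Set.union_diff_distrib
  have hdD : Disjoint (E1 \ B) (E2 \ B) :=
    hd.mono Set.diff_subset Set.diff_subset
  have haddD : f ((E1 ∪ E2) \ B) = f (E1 \ B) + f (E2 \ B) := by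
    rw [hsplitD]
    exact hf.2.1 _ (alg_diff_mem hA h1 hB) _ (alg_diff_mem hA h2 hB) hdD
  have key1 : f (B ∩ E1) - f (E1 \ (B ∩ E1)) ≤ tv 𝒜 f E1 :=
    le_tv hA hC h1 hB1 Set.inter_subset_right
  have key2 : f (B ∩ E2) - f (E2 \ (B ∩ E2)) ≤ tv 𝒜 f E2 :=
    le_tv hA hC h2 hB2 Set.inter_subset_right
  have he1 : E1 \ (B ∩ E1) = E1 \ B := by
    ext x; simp only [Set.mem_diff, Set.mem_inter_iff]; tauto
  have he2 : E2 \ (B ∩ E2) = E2 \ B := by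
    ext x; simp only [Set.mem_diff, Set.mem_inter_iff]; tauto
  rw [he1] at key1; rw [he2] at key2
  linarith [haddB, haddD]

lemma tv_add_le (hA : IsAlg 𝒜) {f g h : Set Ω → ℝ} (hg : IsFinAdd 𝒜 g) (hh : IsFinAdd 𝒜 h)
    (hdec : ∀ A ∈ 𝒜, f A = g A + h A) {E : Set Ω} (hE : E ∈ 𝒜) :
    tv 𝒜 f E ≤ tv 𝒜 g E + tv 𝒜 h E := by
  obtain ⟨Cg, hCg⟩ := hg.2.2
  obtain ⟨Ch, hCh⟩ := hh.2.2
  refine Real.sSup_le (fun x hx => ?_) (by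
    linarith [tv_nonneg_s3 hA hg hE, tv_nonneg_s3 hA hh hE])
  obtain ⟨B, hB, hBE, rfl⟩ := hx
  have hDB : E \ B ∈ 𝒜 := alg_diff_mem hA hE hB
  have k1 : g B - g (E \ B) ≤ tv 𝒜 g E := le_tv hA hCg hE hB hBE
  have k2 : h B - h (E \ B) ≤ tv 𝒜 h E := le_tv hA hCh hE hB hBE
  rw [hdec B hB, hdec (E \ B) hDB]
  linarith

end TVHelpers
/-- if λ dominates M then the component λᶜ of the Lebesgue-type
decomposition also dominates M. -/
theorem dominating_part {Ω : Type*} (𝒜 : Set (Set Ω)) (hA : IsAlg 𝒜)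
    (l lc lp : Set Ω → ℝ) (hl : IsFinAdd 𝒜 l) (hlpos : IsPos 𝒜 l)
    (M : Set (Set Ω → ℝ)) (hM : ∀ μ ∈ M, IsFinAdd 𝒜 μ)
    (hc : IsFinAdd 𝒜 lc) (hp : IsFinAdd 𝒜 lp)
    (hdec : ∀ A ∈ 𝒜, l A = lc A + lp A)
    (hcL : MemLM 𝒜 M lc) (hsing : ∀ m, MemAM 𝒜 M m → Sing 𝒜 lp m)
    (hdom : ∀ μ ∈ M, AC 𝒜 μ l) :
    ∀ μ ∈ M, AC 𝒜 μ lc := by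
  intro μ hμM ε hε
  have hμ : IsFinAdd 𝒜 μ := hM μ hμM
  obtain ⟨Cμ, hCμ⟩ := hμ.2.2
  have hc1 : (1:ℝ) ≤ 1 ⊔ tvNorm 𝒜 μ := le_sup_left
  have hc0 : (0:ℝ) < 1 ⊔ tvNorm 𝒜 μ := lt_of_lt_of_le one_pos hc1
  obtain ⟨δ, hδ0, hδ⟩ := hdom μ hμM (ε/2) (half_pos hε)
  have hCμ0 : 0 ≤ Cμ := le_trans (abs_nonneg _) (hCμ ∅ hA.1)
  -- `nvar 𝒜 μ` belongs to A(M)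
  have hmem : MemAM 𝒜 M (nvar 𝒜 μ) := by
    refine ⟨fun _ => μ, fun n => if n = 0 then 1 else 0, fun _ => hμM, ?_, ?_, ?_⟩
    · intro n; dsimp only; split <;> norm_num
    · simpa using hasSum_ite_eq 0 (1:ℝ)
    · intro A
      rw [tsum_eq_single 0 (fun b hb => by simp [hb])]
      simp
  obtain ⟨B, hB, hBsmall⟩ := hsing _ hmem (min (δ/2) (ε/(2*(1 ⊔ tvNorm 𝒜 μ))))
    (lt_min (half_pos hδ0) (by positivity))
  have hBc : Bᶜ ∈ 𝒜 := hA.2.2.1 _ hB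
  -- bound for nvar
  have hnbd : ∀ A ∈ 𝒜, |nvar 𝒜 μ A| ≤ 2 * Cμ := by
    intro A hAm
    rw [nvar, abs_div, abs_of_pos hc0]
    have h1 : |tv 𝒜 μ A| ≤ 2 * Cμ := by
      rw [abs_of_nonneg (tv_nonneg_s3 hA hμ hAm)]
      exact tv_le_bound hA hCμ hAm
    calc |tv 𝒜 μ A| / (1 ⊔ tvNorm 𝒜 μ) ≤ |tv 𝒜 μ A| / 1 :=
          div_le_div_of_nonneg_left (abs_nonneg _) one_pos hc1
      _ = |tv 𝒜 μ A| := by rw [div_one]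
      _ ≤ 2 * Cμ := h1
  -- 0 ≤ nvar B ≤ tv (nvar μ) B
  have hnvar_le : nvar 𝒜 μ B ≤ tv 𝒜 (nvar 𝒜 μ) B := by
    have := le_tv hA hnbd hB hB (le_refl B)
    rw [Set.diff_self] at this
    have h0 : nvar 𝒜 μ ∅ = 0 := by rw [nvar, tv_empty_s3 hA hμ, zero_div]
    rw [h0] at this
    linarith
  have htvn_nonneg : 0 ≤ tv 𝒜 (nvar 𝒜 μ) B := by
    refine le_trans ?_ hnvar_le
    rw [nvar]
    exact div_nonneg (tv_nonneg_s3 hA hμ hB) (le_of_lt hc0)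
  have hlp_nonneg : 0 ≤ tv 𝒜 lp Bᶜ := tv_nonneg_s3 hA hp hBc
  have hlpB : tv 𝒜 lp Bᶜ < δ/2 :=
    lt_of_le_of_lt (by linarith) (lt_of_lt_of_le hBsmall (min_le_left _ _))
  have hnB : tv 𝒜 (nvar 𝒜 μ) B < ε/(2*(1 ⊔ tvNorm 𝒜 μ)) :=
    lt_of_le_of_lt (by linarith) (lt_of_lt_of_le hBsmall (min_le_right _ _))
  -- tv μ B < ε/2
  have hμB : tv 𝒜 μ B < ε/2 := by
    have h1 : tv 𝒜 μ B = (1 ⊔ tvNorm 𝒜 μ) * nvar 𝒜 μ B := by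
      rw [nvar, mul_div_cancel₀ _ (ne_of_gt hc0)]
    have h2 : (1 ⊔ tvNorm 𝒜 μ) * nvar 𝒜 μ B ≤ (1 ⊔ tvNorm 𝒜 μ) * tv 𝒜 (nvar 𝒜 μ) B :=
      mul_le_mul_of_nonneg_left hnvar_le (le_of_lt hc0)
    have h3 : (1 ⊔ tvNorm 𝒜 μ) * tv 𝒜 (nvar 𝒜 μ) B <
        (1 ⊔ tvNorm 𝒜 μ) * (ε/(2*(1 ⊔ tvNorm 𝒜 μ))) :=
      (mul_lt_mul_iff_right₀ hc0).mpr hnB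
    have h4 : (1 ⊔ tvNorm 𝒜 μ) * (ε/(2*(1 ⊔ tvNorm 𝒜 μ))) = ε/2 := by
      field_simp
    rw [h1]
    rw [h4] at h3
    linarith
  refine ⟨δ/2, half_pos hδ0, fun E hE hEc => ?_⟩
  have hEB : E ∩ B ∈ 𝒜 := alg_inter_mem hA hE hB
  have hEBc : E ∩ Bᶜ ∈ 𝒜 := alg_inter_mem hA hE hBc
  -- split E
  have hsplit : E = (E ∩ B) ∪ (E ∩ Bᶜ) := (Set.inter_union_compl E B).symm
  have hdisj : Disjoint (E ∩ B) (E ∩ Bᶜ) :=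
    (disjoint_compl_right (a := B)).mono Set.inter_subset_right Set.inter_subset_right
  have hsum : tv 𝒜 μ E ≤ tv 𝒜 μ (E ∩ B) + tv 𝒜 μ (E ∩ Bᶜ) := by
    conv_lhs => rw [hsplit]
    exact tv_union_le hA hμ hEB hEBc hdisj
  -- first piece
  have hp1 : tv 𝒜 μ (E ∩ B) < ε/2 :=
    lt_of_le_of_lt (tv_mono_s3 hA hμ hEB hB Set.inter_subset_right) hμB
  -- second piece
  have hl_split : tv 𝒜 l (E ∩ Bᶜ) ≤ tv 𝒜 lc (E ∩ Bᶜ) + tv 𝒜 lp (E ∩ Bᶜ) :=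
    tv_add_le hA hc hp hdec hEBc
  have hlc_mono : tv 𝒜 lc (E ∩ Bᶜ) ≤ tv 𝒜 lc E :=
    tv_mono_s3 hA hc hEBc hE Set.inter_subset_left
  have hlp_mono : tv 𝒜 lp (E ∩ Bᶜ) ≤ tv 𝒜 lp Bᶜ :=
    tv_mono_s3 hA hp hEBc hBc Set.inter_subset_right
  have hl_small : tv 𝒜 l (E ∩ Bᶜ) < δ := by linarith
  have hp2 : tv 𝒜 μ (E ∩ Bᶜ) < ε/2 := hδ _ hEBc hl_small
  linarith
end

section
/- Let A be an algebra of subsets of Ω, λ ∈ ba(A)₊, and H ⊆ A. Define A_H = {A ∈ A : inf over finite subsets α ⊆ H of λ(A \ ⋃_{H∈α} H) = 0}. Then there exists a sequence H₁, H₂, ... ∈ H such that lim_{k→∞} sup_{A ∈ A_H} λ(A \ (H₁ ∪ ... ∪ H_k)) = 0. -/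
open Set Filter Topology

variable {Ω : Type*}

section DrewnowskiHelpers

variable {Ω : Type*} {𝒜 : Set (Set Ω)}

lemma isAlg_inter (hA : IsAlg 𝒜) {A B : Set Ω} (ha : A ∈ 𝒜) (hb : B ∈ 𝒜) :
    A ∩ B ∈ 𝒜 := by
  have h := hA.2.2.1 _ (hA.2.2.2 _ (hA.2.2.1 _ ha) _ (hA.2.2.1 _ hb))
  simpa [Set.compl_union, compl_compl] using h

lemma isAlg_diff (hA : IsAlg 𝒜) {A B : Set Ω} (ha : A ∈ 𝒜) (hb : B ∈ 𝒜) :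
    A \ B ∈ 𝒜 := by
  have h := isAlg_inter hA ha (hA.2.2.1 _ hb)
  simpa [Set.diff_eq] using h

lemma isAlg_sUnion (hA : IsAlg 𝒜) (s : Finset (Set Ω)) (h : ↑s ⊆ 𝒜) :
    ⋃₀ ↑s ∈ 𝒜 := by
  classical
  induction s using Finset.induction_on with
  | empty => simpa using hA.1
  | @insert x t _ ih =>
      rw [Finset.coe_insert, Set.sUnion_insert]
      refine hA.2.2.2 _ (h (by simp)) _ (ih fun y hy => h (by simp [Finset.mem_coe.mp hy]))

lemma finAdd_mono (hA : IsAlg 𝒜) {l : Set Ω → ℝ} (hl : IsFinAdd 𝒜 l)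
    (hpos : IsPos 𝒜 l) {A B : Set Ω} (ha : A ∈ 𝒜) (hb : B ∈ 𝒜) (hsub : A ⊆ B) :
    l A ≤ l B := by
  have hd : B \ A ∈ 𝒜 := isAlg_diff hA hb ha
  have h1 := hl.2.1 A ha (B \ A) hd disjoint_sdiff_self_right
  rw [Set.union_diff_cancel hsub] at h1
  have h2 := hpos _ hd
  linarith

lemma finAdd_subadd (hA : IsAlg 𝒜) {l : Set Ω → ℝ} (hl : IsFinAdd 𝒜 l)
    (hpos : IsPos 𝒜 l) {A B : Set Ω} (ha : A ∈ 𝒜) (hb : B ∈ 𝒜) :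
    l (A ∪ B) ≤ l A + l B := by
  have hd : B \ A ∈ 𝒜 := isAlg_diff hA hb ha
  have h1 := hl.2.1 A ha (B \ A) hd disjoint_sdiff_self_right
  rw [Set.union_diff_self] at h1
  have h2 : l (B \ A) ≤ l B := finAdd_mono hA hl hpos hd hb Set.diff_subset
  linarith

end DrewnowskiHelpers

/-- Corollary on 𝒜_ℋ: there is a sequence in ℋ such that
lim_k sup_{A ∈ 𝒜_ℋ} λ(A \ (H₁ ∪ ⋯ ∪ H_k)) = 0. -/
theorem drewnowski {Ω : Type*} (𝒜 : Set (Set Ω)) (hA : IsAlg 𝒜)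
    (l : Set Ω → ℝ) (hl : IsFinAdd 𝒜 l) (hpos : IsPos 𝒜 l)
    (H : Set (Set Ω)) (hH : H ⊆ 𝒜) (hne : H.Nonempty) :
    ∃ Hseq : ℕ → Set Ω, (∀ n, Hseq n ∈ H) ∧
      ∀ ε > (0:ℝ), ∃ k : ℕ, ∀ A ∈ 𝒜,
        (∀ δ > (0:ℝ), ∃ s : Finset (Set Ω), ↑s ⊆ H ∧ l (A \ ⋃₀ ↑s) < δ) →
        l (A \ ⋃ n ∈ Finset.range (k+1), Hseq n) < ε := by
  classical
  obtain ⟨hl0, hladd, C, hC⟩ := hl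
  obtain ⟨h₀, hh₀⟩ := hne
  set T : Set ℝ := {x | ∃ s : Finset (Set Ω), ↑s ⊆ H ∧ x = l (⋃₀ ↑s)} with hTdef
  have hT0 : (0:ℝ) ∈ T := ⟨∅, by simp, by simp [hl0]⟩
  have hTne : T.Nonempty := ⟨0, hT0⟩
  have hTbdd : BddAbove T := by
    refine ⟨C, fun x hx => ?_⟩
    obtain ⟨s, hs, rfl⟩ := hx
    exact le_trans (le_abs_self _) (hC _ (isAlg_sUnion hA s (hs.trans hH)))
  set S : ℝ := sSup T with hSdef
  have hTleS : ∀ x ∈ T, x ≤ S := fun x hx => le_csSup hTbdd hx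
  -- choose nearly optimal finite families
  have hsk : ∀ k : ℕ, ∃ s : Finset (Set Ω), ↑s ⊆ H ∧ S - 1/(k+1) < l (⋃₀ ↑s) := by
    intro k
    have hpos' : (0:ℝ) < 1/(k+1) := by positivity
    have : S - 1/(k+1) < S := by linarith
    obtain ⟨x, hxT, hx⟩ := exists_lt_of_lt_csSup hTne this
    obtain ⟨s, hs, rfl⟩ := hxT
    exact ⟨s, hs, hx⟩
  choose sk hskH hskl using hsk
  set f : ℕ → ℕ → Set Ω := fun k n => (sk k).toList.getD n h₀ with hfdef
  have hfH : ∀ k n, f k n ∈ H := by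
    intro k n
    rcases lt_or_ge n (sk k).toList.length with h | h
    · have : f k n = (sk k).toList[n] := List.getD_eq_getElem _ _ h
      rw [this]
      exact hskH k (Finset.mem_coe.mpr (Finset.mem_toList.mp (List.getElem_mem h)))
    · rw [hfdef]; simp only [List.getD_eq_default _ _ h]; exact hh₀
  have hfcover : ∀ k, ∀ x ∈ sk k, ∃ m < (sk k).card, f k m = x := by
    intro k x hx
    obtain ⟨m, hm, hmx⟩ := List.mem_iff_getElem.mp (Finset.mem_toList.mpr hx)
    refine ⟨m, by simpa [Finset.length_toList] using hm, ?_⟩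
    rw [hfdef]; simp only [List.getD_eq_getElem _ _ hm]; exact hmx
  refine ⟨fun n => f (Nat.unpair n).1 (Nat.unpair n).2, fun n => hfH _ _, ?_⟩
  intro ε hε
  obtain ⟨j, hj⟩ := exists_nat_one_div_lt (show (0:ℝ) < ε/2 by linarith)
  have hjl : S - ε/2 < l (⋃₀ ↑(sk j)) := by
    have := hskl j
    have hle : (1:ℝ)/(j+1) < ε/2 := by exact_mod_cast hj
    linarith
  set k : ℕ := (Finset.range (sk j).card).sup (fun m => Nat.pair j m) with hkdef
  refine ⟨k, ?_⟩
  set U : Set Ω := ⋃ n ∈ Finset.range (k+1), f (Nat.unpair n).1 (Nat.unpair n).2 with hUdef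
  set t : Finset (Set Ω) :=
    (Finset.range (k+1)).image (fun n => f (Nat.unpair n).1 (Nat.unpair n).2) with htdef
  have htH : ↑t ⊆ H := by
    intro x hx
    simp only [htdef, Finset.coe_image, Set.mem_image] at hx
    obtain ⟨n, _, rfl⟩ := hx
    exact hfH _ _
  have hUt : U = ⋃₀ ↑t := by
    rw [hUdef, htdef, Finset.coe_image, Set.sUnion_image]
    simp
  have hUA : U ∈ 𝒜 := hUt ▸ isAlg_sUnion hA t (htH.trans hH)
  have hjsub : ⋃₀ ↑(sk j) ⊆ U := by
    rw [hUt]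
    intro x hx
    obtain ⟨B, hB, hxB⟩ := hx
    obtain ⟨m, hm, hfm⟩ := hfcover j B (Finset.mem_coe.mp hB)
    refine ⟨B, ?_, hxB⟩
    simp only [htdef, Finset.coe_image, Set.mem_image]
    refine ⟨Nat.pair j m, ?_, by simp [hfm]⟩
    simp only [Finset.coe_range, Set.mem_Iio]
    have : Nat.pair j m ≤ k :=
      Finset.le_sup (f := fun m => Nat.pair j m) (Finset.mem_range.mpr hm)
    omega
  have hUbig : S - ε/2 < l U :=
    lt_of_lt_of_le hjl (finAdd_mono hA ⟨hl0, hladd, C, hC⟩ hpos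
      (isAlg_sUnion hA _ ((hskH j).trans hH)) hUA hjsub)
  intro A hAmem hAH
  obtain ⟨s, hsH, hsl⟩ := hAH (ε/2) (by linarith)
  have hsA : ⋃₀ ↑s ∈ 𝒜 := isAlg_sUnion hA s (hsH.trans hH)
  have hdiff1 : A \ ⋃₀ ↑s ∈ 𝒜 := isAlg_diff hA hAmem hsA
  have hdiff2 : ⋃₀ ↑s \ U ∈ 𝒜 := isAlg_diff hA hsA hUA
  have hdiff0 : A \ U ∈ 𝒜 := isAlg_diff hA hAmem hUA
  have hlf : IsFinAdd 𝒜 l := ⟨hl0, hladd, C, hC⟩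
  -- l (⋃₀ s \ U) ≤ S - l U
  have hunionT : l (⋃₀ ↑s ∪ U) ≤ S := by
    refine hTleS _ ⟨s ∪ t, ?_, ?_⟩
    · rw [Finset.coe_union]; exact Set.union_subset hsH htH
    · rw [Finset.coe_union, Set.sUnion_union, hUt]
  have hadd : l (⋃₀ ↑s \ U ∪ U) = l (⋃₀ ↑s \ U) + l U :=
    hladd _ hdiff2 _ hUA disjoint_sdiff_self_left
  rw [Set.diff_union_self] at hadd
  have hsmall : l (⋃₀ ↑s \ U) ≤ S - l U := by linarith
  have hsub : A \ U ⊆ (A \ ⋃₀ ↑s) ∪ (⋃₀ ↑s \ U) := by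
    intro x hx
    by_cases h : x ∈ ⋃₀ ↑s
    · exact Or.inr ⟨h, hx.2⟩
    · exact Or.inl ⟨hx.1, h⟩
  have h1 : l (A \ U) ≤ l ((A \ ⋃₀ ↑s) ∪ (⋃₀ ↑s \ U)) :=
    finAdd_mono hA hlf hpos hdiff0 (hA.2.2.2 _ hdiff1 _ hdiff2) hsub
  have h2 : l ((A \ ⋃₀ ↑s) ∪ (⋃₀ ↑s \ U)) ≤ l (A \ ⋃₀ ↑s) + l (⋃₀ ↑s \ U) :=
    finAdd_subadd hA hlf hpos hdiff1 hdiff2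
  calc l (A \ ⋃ n ∈ Finset.range (k+1), f (Nat.unpair n).1 (Nat.unpair n).2)
      = l (A \ U) := by rw [hUdef]
    _ ≤ l (A \ ⋃₀ ↑s) + l (⋃₀ ↑s \ U) := le_trans h1 h2
    _ < ε/2 + (S - l U) := by
        rcases lt_or_eq_of_le hsmall with h | h
        · linarith
        · linarith
    _ < ε := by linarith
end

section
/- Let A be an algebra of subsets of Ω and λ ∈ ba(A)₊. Define the λ-completion A(λ) = {B ⊆ Ω : inf{λ(A' \ A) : A, A' ∈ A, A ⊆ B ⊆ A'} = 0}. Then A(λ) is an algebra of subsets of Ω containing A, and the formula λ̄(B) = sup{λ(A) : A ∈ A, A ⊆ B} = inf{λ(A') : A' ∈ A, B ⊆ A'} defines the unique finitely additive extension of λ to A(λ). -/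
open Set Filter Topology

variable {Ω : Type*}

/-- the λ-completion 𝒜(λ) is an algebra containing 𝒜, and λ̄ given
by the sup/inf formula is the unique (positive) finitely additive extension of λ. -/
theorem completion_extension {Ω : Type*} (𝒜 : Set (Set Ω)) (hA : IsAlg 𝒜)
    (l : Set Ω → ℝ) (hl : IsFinAdd 𝒜 l) (hpos : IsPos 𝒜 l) :
    IsAlg (Completion 𝒜 l) ∧ 𝒜 ⊆ Completion 𝒜 l ∧
    (∀ A ∈ 𝒜, extOf 𝒜 l A = l A) ∧
    (∀ B ∈ Completion 𝒜 l,
      extOf 𝒜 l B = sInf {x | ∃ A' ∈ 𝒜, B ⊆ A' ∧ x = l A'}) ∧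
    IsFinAdd (Completion 𝒜 l) (extOf 𝒜 l) ∧ IsPos (Completion 𝒜 l) (extOf 𝒜 l) ∧
    (∀ m : Set Ω → ℝ, IsFinAdd (Completion 𝒜 l) m → IsPos (Completion 𝒜 l) m →
      (∀ A ∈ 𝒜, m A = l A) → ∀ B ∈ Completion 𝒜 l, m B = extOf 𝒜 l B) := by
  obtain ⟨hempty, huniv, hcompl, hunion⟩ := hA
  obtain ⟨hl0, hladd, C, hlC⟩ := hl
  have hinter : ∀ A ∈ 𝒜, ∀ B ∈ 𝒜, A ∩ B ∈ 𝒜 := by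
    intro A hAm B hBm
    have := hcompl _ (hunion _ (hcompl _ hAm) _ (hcompl _ hBm))
    simpa [Set.compl_union] using this
  have hdiff : ∀ A ∈ 𝒜, ∀ B ∈ 𝒜, A \ B ∈ 𝒜 := by
    intro A hAm B hBm
    have := hinter _ hAm _ (hcompl _ hBm)
    simpa [Set.diff_eq] using this
  have hsplit : ∀ A ∈ 𝒜, ∀ B ∈ 𝒜, A ⊆ B → l B = l A + l (B \ A) := by
    intro A hAm B hBm hAB
    have h := hladd A hAm (B \ A) (hdiff _ hBm _ hAm) disjoint_sdiff_right
    rwa [Set.union_diff_cancel hAB] at h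
  have hmono : ∀ A ∈ 𝒜, ∀ B ∈ 𝒜, A ⊆ B → l A ≤ l B := by
    intro A hAm B hBm hAB
    have := hsplit A hAm B hBm hAB
    have := hpos (B \ A) (hdiff _ hBm _ hAm)
    linarith
  have hsubadd : ∀ A ∈ 𝒜, ∀ B ∈ 𝒜, l (A ∪ B) ≤ l A + l B := by
    intro A hAm B hBm
    have h1 := hsplit A hAm (A ∪ B) (hunion _ hAm _ hBm) Set.subset_union_left
    have h2 : l ((A ∪ B) \ A) ≤ l B := by
      apply hmono _ (hdiff _ (hunion _ hAm _ hBm) _ hAm) _ hBm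
      intro x hx
      rcases hx with ⟨hx1 | hx1, hx2⟩
      · exact absurd hx1 hx2
      · exact hx1
    linarith
  have hmem0 : ∀ B : Set Ω, (0:ℝ) ∈ {x | ∃ A ∈ 𝒜, A ⊆ B ∧ x = l A} :=
    fun B => ⟨∅, hempty, Set.empty_subset B, hl0.symm⟩
  have hbdd : ∀ B : Set Ω, BddAbove {x | ∃ A ∈ 𝒜, A ⊆ B ∧ x = l A} := by
    intro B
    refine ⟨l Set.univ, ?_⟩
    rintro x ⟨A, hAm, -, rfl⟩
    exact hmono A hAm _ huniv (Set.subset_univ A)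
  have hle_ext : ∀ B : Set Ω, ∀ A ∈ 𝒜, A ⊆ B → l A ≤ extOf 𝒜 l B := by
    intro B A hAm hAB
    exact le_csSup (hbdd B) ⟨A, hAm, hAB, rfl⟩
  have hcsSup_le : ∀ (B : Set Ω) (c : ℝ), (∀ A ∈ 𝒜, A ⊆ B → l A ≤ c) → extOf 𝒜 l B ≤ c := by
    intro B c h
    apply csSup_le ⟨0, hmem0 B⟩
    rintro x ⟨A, hAm, hAB, rfl⟩
    exact h A hAm hAB
  have hext_le : ∀ B : Set Ω, ∀ A' ∈ 𝒜, B ⊆ A' → extOf 𝒜 l B ≤ l A' := by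
    intro B A' hA'm hBA'
    exact hcsSup_le B _ (fun A hAm hAB => hmono A hAm A' hA'm (hAB.trans hBA'))
  have hext_nonneg : ∀ B : Set Ω, 0 ≤ extOf 𝒜 l B := by
    intro B
    have := hle_ext B ∅ hempty (Set.empty_subset B)
    rwa [hl0] at this
  have hsub : 𝒜 ⊆ Completion 𝒜 l := by
    intro A hAm ε hε
    exact ⟨A, hAm, A, hAm, subset_rfl, subset_rfl, by simpa [hl0] using hε⟩
  have heps : ∀ a b : ℝ, (∀ ε > (0:ℝ), a ≤ b + ε) → a ≤ b := by
    intro a b h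
    by_contra hc
    push_neg at hc
    have := h ((a - b) / 2) (by linarith)
    linarith
  -- Completion is an algebra
  have hCalg : IsAlg (Completion 𝒜 l) := by
    refine ⟨hsub hempty, hsub huniv, ?_, ?_⟩
    · intro B hB ε hε
      obtain ⟨A, hAm, A', hA'm, h1, h2, h3⟩ := hB ε hε
      refine ⟨A'ᶜ, hcompl _ hA'm, Aᶜ, hcompl _ hAm,
        Set.compl_subset_compl.2 h2, Set.compl_subset_compl.2 h1, ?_⟩
      have : Aᶜ \ A'ᶜ = A' \ A := by
        simp [Set.diff_eq, Set.inter_comm]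
      rwa [this]
    · intro B₁ hB₁ B₂ hB₂ ε hε
      obtain ⟨A₁, hA₁m, A₁', hA₁'m, h11, h12, h13⟩ := hB₁ (ε/2) (by linarith)
      obtain ⟨A₂, hA₂m, A₂', hA₂'m, h21, h22, h23⟩ := hB₂ (ε/2) (by linarith)
      refine ⟨A₁ ∪ A₂, hunion _ hA₁m _ hA₂m, A₁' ∪ A₂', hunion _ hA₁'m _ hA₂'m,
        Set.union_subset_union h11 h21, Set.union_subset_union h12 h22, ?_⟩
      have hsubD : (A₁' ∪ A₂') \ (A₁ ∪ A₂) ⊆ (A₁' \ A₁) ∪ (A₂' \ A₂) := by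
        rintro x ⟨hx1 | hx1, hx2⟩
        · exact Or.inl ⟨hx1, fun h => hx2 (Or.inl h)⟩
        · exact Or.inr ⟨hx1, fun h => hx2 (Or.inr h)⟩
      have hm1 := hmono _ (hdiff _ (hunion _ hA₁'m _ hA₂'m) _ (hunion _ hA₁m _ hA₂m))
        _ (hunion _ (hdiff _ hA₁'m _ hA₁m) _ (hdiff _ hA₂'m _ hA₂m)) hsubD
      have hm2 := hsubadd _ (hdiff _ hA₁'m _ hA₁m) _ (hdiff _ hA₂'m _ hA₂m)
      linarith
  have hexteq : ∀ A ∈ 𝒜, extOf 𝒜 l A = l A := by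
    intro A hAm
    exact le_antisymm (hext_le A A hAm subset_rfl) (hle_ext A A hAm subset_rfl)
  have hinf : ∀ B ∈ Completion 𝒜 l,
      extOf 𝒜 l B = sInf {x | ∃ A' ∈ 𝒜, B ⊆ A' ∧ x = l A'} := by
    intro B hB
    have hne : {x | ∃ A' ∈ 𝒜, B ⊆ A' ∧ x = l A'}.Nonempty :=
      ⟨l Set.univ, Set.univ, huniv, Set.subset_univ B, rfl⟩
    have hbddb : BddBelow {x | ∃ A' ∈ 𝒜, B ⊆ A' ∧ x = l A'} := by
      refine ⟨0, ?_⟩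
      rintro x ⟨A', hA'm, -, rfl⟩
      exact hpos A' hA'm
    apply le_antisymm
    · apply le_csInf hne
      rintro x ⟨A', hA'm, hBA', rfl⟩
      exact hext_le B A' hA'm hBA'
    · apply heps
      intro ε hε
      obtain ⟨A, hAm, A', hA'm, h1, h2, h3⟩ := hB ε hε
      have h4 := csInf_le hbddb ⟨A', hA'm, h2, rfl⟩
      have h5 := hsplit A hAm A' hA'm (h1.trans h2)
      have h6 := hle_ext B A hAm h1
      linarith
  -- finite additivity of the extension
  have hadd : ∀ B₁ ∈ Completion 𝒜 l, ∀ B₂ ∈ Completion 𝒜 l, Disjoint B₁ B₂ →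
      extOf 𝒜 l (B₁ ∪ B₂) = extOf 𝒜 l B₁ + extOf 𝒜 l B₂ := by
    intro B₁ hB₁ B₂ hB₂ hdis
    apply le_antisymm
    · apply heps
      intro ε hε
      obtain ⟨A₁, hA₁m, A₁', hA₁'m, h11, h12, h13⟩ := hB₁ (ε/2) (by linarith)
      obtain ⟨A₂, hA₂m, A₂', hA₂'m, h21, h22, h23⟩ := hB₂ (ε/2) (by linarith)
      have h1 := hext_le (B₁ ∪ B₂) (A₁' ∪ A₂') (hunion _ hA₁'m _ hA₂'m)
        (Set.union_subset_union h12 h22)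
      have h2 := hsubadd _ hA₁'m _ hA₂'m
      have h3 := hsplit A₁ hA₁m A₁' hA₁'m (h11.trans h12)
      have h4 := hsplit A₂ hA₂m A₂' hA₂'m (h21.trans h22)
      have h5 := hle_ext B₁ A₁ hA₁m h11
      have h6 := hle_ext B₂ A₂ hA₂m h21
      linarith
    · have h1 : ∀ A₁ ∈ 𝒜, A₁ ⊆ B₁ → l A₁ + extOf 𝒜 l B₂ ≤ extOf 𝒜 l (B₁ ∪ B₂) := by
        intro A₁ hA₁m hA₁B
        have h2 : extOf 𝒜 l B₂ ≤ extOf 𝒜 l (B₁ ∪ B₂) - l A₁ := by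
          apply hcsSup_le
          intro A₂ hA₂m hA₂B
          have hd : Disjoint A₁ A₂ := hdis.mono hA₁B hA₂B
          have h3 := hladd A₁ hA₁m A₂ hA₂m hd
          have h4 := hle_ext (B₁ ∪ B₂) (A₁ ∪ A₂) (hunion _ hA₁m _ hA₂m)
            (Set.union_subset_union hA₁B hA₂B)
          linarith
        linarith
      have h2 : extOf 𝒜 l B₁ ≤ extOf 𝒜 l (B₁ ∪ B₂) - extOf 𝒜 l B₂ :=
        hcsSup_le _ _ (fun A hm hs => by have := h1 A hm hs; linarith)
      linarith
  refine ⟨hCalg, hsub, hexteq, hinf, ⟨by rw [hexteq ∅ hempty, hl0], hadd,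
    l Set.univ, fun B _ => ?_⟩, fun B _ => hext_nonneg B, ?_⟩
  · rw [abs_le]
    exact ⟨by linarith [hext_nonneg B, hpos Set.univ huniv],
      hext_le B Set.univ huniv (Set.subset_univ B)⟩
  · -- uniqueness
    intro m hm hmpos hmA B hB
    obtain ⟨hm0, hmadd, -⟩ := hm
    obtain ⟨hCe, hCu, hCc, hCun⟩ := hCalg
    have hCinter : ∀ X ∈ Completion 𝒜 l, ∀ Y ∈ Completion 𝒜 l, X ∩ Y ∈ Completion 𝒜 l := by
      intro X hX Y hY
      have := hCc _ (hCun _ (hCc _ hX) _ (hCc _ hY))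
      simpa [Set.compl_union] using this
    have hCdiff : ∀ X ∈ Completion 𝒜 l, ∀ Y ∈ Completion 𝒜 l, X \ Y ∈ Completion 𝒜 l := by
      intro X hX Y hY
      have := hCinter _ hX _ (hCc _ hY)
      simpa [Set.diff_eq] using this
    have hmmono : ∀ X ∈ Completion 𝒜 l, ∀ Y ∈ Completion 𝒜 l, X ⊆ Y → m X ≤ m Y := by
      intro X hX Y hY hXY
      have h := hmadd X hX (Y \ X) (hCdiff _ hY _ hX) disjoint_sdiff_right
      rw [Set.union_diff_cancel hXY] at h
      have := hmpos (Y \ X) (hCdiff _ hY _ hX)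
      linarith
    have key : ∀ ε > (0:ℝ), |m B - extOf 𝒜 l B| ≤ ε := by
      intro ε hε
      obtain ⟨A, hAm, A', hA'm, h1, h2, h3⟩ := hB ε hε
      have hm1 : l A ≤ m B := by
        rw [← hmA A hAm]; exact hmmono A (hsub hAm) B hB h1
      have hm2 : m B ≤ l A' := by
        rw [← hmA A' hA'm]; exact hmmono B hB A' (hsub hA'm) h2
      have he1 := hle_ext B A hAm h1
      have he2 := hext_le B A' hA'm h2
      have h5 := hsplit A hAm A' hA'm (h1.trans h2)
      rw [abs_le]
      constructor <;> linarith
    have : |m B - extOf 𝒜 l B| = 0 := by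
      by_contra hc
      have habs : 0 < |m B - extOf 𝒜 l B| := lt_of_le_of_ne (abs_nonneg _) (Ne.symm hc)
      have := key (|m B - extOf 𝒜 l B| / 2) (by linarith)
      linarith
    have := abs_eq_zero.mp this
    linarith
end
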